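/- arXiv:1601.05189 — 4 statements merged into one kernel-verified Lean document; each statement's English description precedes it below -/
import Mathlib

section
/- Assume β − γ is not constant on the closure of Ω and that for every d > 0 the quantity λ_p(d) is the principal eigenvalue of M_d, i.e. there is a positive continuous eigenfunction φ_d on the closure of Ω with M_d[φ_d](x) = −λ_p(d) φ_d(x) for all x ∈ Ω. Then λ_p is strictly monotone increasing in d: for all 0 < d₁ < d₂ one has λ_p(d₁) < λ_p(d₂). -/
open MeasureTheory Set Filter Topology

noncomputable section

abbrev Euc (n : ℕ) := EuclideanSpace ℝ (Fin n)

/-- Ω is a bounded domain. -/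
def DomainHyp {n : ℕ} (Ω : Set (Euc n)) : Prop :=
  IsOpen Ω ∧ IsConnected Ω ∧ Bornology.IsBounded Ω

/-- Hypotheses (J) on the dispersal kernel. -/
def KernelHyp {n : ℕ} (J : Euc n → ℝ) (Ω : Set (Euc n)) : Prop :=
  Continuous J ∧ 0 < J 0 ∧ (∀ x, J (-x) = J x) ∧ (∀ x, 0 ≤ J x) ∧
    (∫ x, J x) = 1 ∧ ¬ (∀ x ∈ Ω, (∫ y in Ω, J (x - y)) = 1)

/-- positive continuous rate function on the closure of Ω. -/
def RateHyp {n : ℕ} (Ω : Set (Euc n)) (f : Euc n → ℝ) : Prop :=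
  ContinuousOn f (closure Ω) ∧ ∀ x ∈ closure Ω, 0 < f x

/-- The set of Rayleigh quotients over nonzero φ ∈ L²(Ω). -/
def rayleighSet {n : ℕ} (J : Euc n → ℝ) (Ω : Set (Euc n)) (β γ : Euc n → ℝ) (d : ℝ) :
    Set ℝ :=
  { r | ∃ φ : Euc n → ℝ, MemLp φ 2 (volume.restrict Ω) ∧
      ¬ (∀ᵐ x ∂(volume.restrict Ω), φ x = 0) ∧
      r = (d / 2 * (∫ x in Ω, ∫ y in Ω, J (x - y) * (φ y - φ x) ^ 2)
            + ∫ x in Ω, (γ x - β x) * φ x ^ 2) / (∫ x in Ω, φ x ^ 2) }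

/-- λ_p(d). -/
def lambdaP {n : ℕ} (J : Euc n → ℝ) (Ω : Set (Euc n)) (β γ : Euc n → ℝ) (d : ℝ) : ℝ :=
  sInf (rayleighSet J Ω β γ d)

/-- `lam` is a principal eigenvalue of `M_d`. -/
def IsPrincipalEigen {n : ℕ} (J : Euc n → ℝ) (Ω : Set (Euc n)) (β γ : Euc n → ℝ)
    (d lam : ℝ) : Prop :=
  ∃ φ : Euc n → ℝ, ContinuousOn φ (closure Ω) ∧ (∀ x ∈ closure Ω, 0 < φ x) ∧
    ∀ x ∈ Ω, d * (∫ y in Ω, J (x - y) * (φ y - φ x)) + (β x - γ x) * φ x = -lam * φ x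


/-- if β − γ is not constant on Ω̄ and λ_p(d) is the principal eigenvalue
of M_d for every d > 0, then λ_p is strictly increasing in d. -/
theorem lambdaP_strictMono {n : ℕ} (J : Euc n → ℝ) (Ω : Set (Euc n))
    (β γ : Euc n → ℝ) (hΩ : DomainHyp Ω) (hJ : KernelHyp J Ω)
    (hβ : RateHyp Ω β) (hγ : RateHyp Ω γ)
    (hnc : ¬ ∃ c : ℝ, ∀ x ∈ closure Ω, β x - γ x = c)
    (hpe : ∀ d : ℝ, 0 < d → IsPrincipalEigen J Ω β γ d (lambdaP J Ω β γ d)) :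
    ∀ d₁ d₂ : ℝ, 0 < d₁ → d₁ < d₂ → lambdaP J Ω β γ d₁ < lambdaP J Ω β γ d₂ := by
  intro d₁ d₂ hd1 hd12
  obtain ⟨hΩo, hΩconn, hΩb⟩ := hΩ
  obtain ⟨hJc, hJ0, hJsymm, hJnn, -, -⟩ := hJ
  have hΩne : Ω.Nonempty := hΩconn.nonempty
  have hΩm : MeasurableSet Ω := hΩo.measurableSet
  have hclC : IsCompact (closure Ω) :=
    Metric.isCompact_of_isClosed_isBounded isClosed_closure hΩb.closure
  haveI hfin : IsFiniteMeasure (volume.restrict Ω : Measure (Euc n)) :=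
    ⟨by rw [Measure.restrict_apply_univ]; exact hΩb.measure_lt_top⟩
  set μ : Measure (Euc n) := volume.restrict Ω with hμ
  -- generic integrability facts
  have hint1 : ∀ f : Euc n → ℝ, ContinuousOn f (closure Ω) → Integrable f μ := by
    intro f hf
    obtain ⟨C, hC⟩ := hclC.exists_bound_of_continuousOn hf
    refine ⟨(hf.mono subset_closure).aestronglyMeasurable hΩm,
      HasFiniteIntegral.of_bounded (C := C) ?_⟩
    filter_upwards [ae_restrict_mem hΩm] with x hx
    exact hC x (subset_closure hx)
  have hprodrw : μ.prod μ = (volume.prod volume).restrict (Ω ×ˢ Ω) := by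
    rw [hμ, Measure.prod_restrict]
  have hmemprod : ∀ᵐ z ∂(μ.prod μ), z ∈ Ω ×ˢ Ω := by
    rw [hprodrw]; exact ae_restrict_mem (hΩm.prod hΩm)
  have hint2 : ∀ f : Euc n × Euc n → ℝ, ContinuousOn f (closure Ω ×ˢ closure Ω) →
      Integrable f (μ.prod μ) := by
    intro f hf
    obtain ⟨C, hC⟩ := (hclC.prod hclC).exists_bound_of_continuousOn hf
    refine ⟨?_, HasFiniteIntegral.of_bounded (C := C) ?_⟩
    · rw [hprodrw]
      exact (hf.mono (Set.prod_mono subset_closure subset_closure)).aestronglyMeasurable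
        (hΩm.prod hΩm)
    · filter_upwards [hmemprod] with z hz
      exact hC z ⟨subset_closure hz.1, subset_closure hz.2⟩
  have hd2 : 0 < d₂ := hd1.trans hd12
  obtain ⟨φ, hφc, hφpos, hφeq⟩ := hpe d₂ hd2
  set lam := lambdaP J Ω β γ d₂ with hlamdef
  -- continuity helpers
  have hφ1 : ContinuousOn (fun z : Euc n × Euc n => φ z.1) (closure Ω ×ˢ closure Ω) :=
    hφc.comp continuous_fst.continuousOn (fun z hz => hz.1)
  have hφ2 : ContinuousOn (fun z : Euc n × Euc n => φ z.2) (closure Ω ×ˢ closure Ω) :=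
    hφc.comp continuous_snd.continuousOn (fun z hz => hz.2)
  have hJ2 : Continuous fun z : Euc n × Euc n => J (z.1 - z.2) :=
    hJc.comp (continuous_fst.sub continuous_snd)
  set g : Euc n × Euc n → ℝ := fun z => J (z.1 - z.2) * (φ z.2 - φ z.1) ^ 2 with hgdef
  set H : Euc n × Euc n → ℝ := fun z => J (z.1 - z.2) * (φ z.2 - φ z.1) * φ z.1 with hHdef
  set H' : Euc n × Euc n → ℝ := fun z => J (z.1 - z.2) * (φ z.2 - φ z.1) * φ z.2 with hH'def
  have hgcont : ContinuousOn g (closure Ω ×ˢ closure Ω) :=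
    hJ2.continuousOn.mul ((hφ2.sub hφ1).pow 2)
  have hHcont : ContinuousOn H (closure Ω ×ˢ closure Ω) :=
    (hJ2.continuousOn.mul (hφ2.sub hφ1)).mul hφ1
  have hH'cont : ContinuousOn H' (closure Ω ×ˢ closure Ω) :=
    (hJ2.continuousOn.mul (hφ2.sub hφ1)).mul hφ2
  have hgint : Integrable g (μ.prod μ) := hint2 g hgcont
  have hHint : Integrable H (μ.prod μ) := hint2 H hHcont
  have hH'int : Integrable H' (μ.prod μ) := hint2 H' hH'cont
  set K : ℝ := ∫ z, g z ∂(μ.prod μ) with hKdef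
  have hKiter : (∫ x in Ω, ∫ y in Ω, J (x - y) * (φ y - φ x) ^ 2) = K :=
    (integral_prod g hgint).symm
  have hKnn : 0 ≤ K := integral_nonneg (fun z => mul_nonneg (hJnn _) (sq_nonneg _))
  -- symmetrization
  have hswap : ∫ z, H' z ∂(μ.prod μ) = - ∫ z, H z ∂(μ.prod μ) := by
    have h1 : ∫ z : Euc n × Euc n, H z.swap ∂(μ.prod μ) = ∫ z, H z ∂(μ.prod μ) :=
      integral_prod_swap H
    have h2 : (fun z : Euc n × Euc n => H z.swap) = fun z => - H' z := by
      funext z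
      show J (z.2 - z.1) * (φ z.1 - φ z.2) * φ z.2 = -(J (z.1 - z.2) * (φ z.2 - φ z.1) * φ z.2)
      rw [show z.2 - z.1 = -(z.1 - z.2) by abel, hJsymm]
      ring
    rw [h2, integral_neg] at h1
    linarith
  have hK2 : K = -2 * ∫ z, H z ∂(μ.prod μ) := by
    have hsub : K = ∫ z, (H' z - H z) ∂(μ.prod μ) := by
      apply integral_congr_ae
      filter_upwards with z
      show J (z.1 - z.2) * (φ z.2 - φ z.1) ^ 2 =
        J (z.1 - z.2) * (φ z.2 - φ z.1) * φ z.2 - J (z.1 - z.2) * (φ z.2 - φ z.1) * φ z.1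
      ring
    rw [hsub, integral_sub hH'int hHint, hswap]
    ring
  -- denominator and basic positivity
  set S : ℝ := ∫ x in Ω, φ x ^ 2 with hSdef
  set Iβγ : ℝ := ∫ x in Ω, (γ x - β x) * φ x ^ 2 with hIdef
  obtain ⟨Mφ, hMφ⟩ := hclC.exists_bound_of_continuousOn hφc
  have hφL2 : MemLp φ 2 μ := by
    refine MemLp.of_bound ((hφc.mono subset_closure).aestronglyMeasurable hΩm) Mφ ?_
    filter_upwards [ae_restrict_mem hΩm] with x hx
    exact hMφ x (subset_closure hx)
  have hΩpos : 0 < volume Ω := hΩo.measure_pos volume hΩne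
  have hφne0 : ¬ (∀ᵐ x ∂μ, φ x = 0) := by
    intro h
    have h0 : μ {a | ¬ φ a = 0} = 0 := ae_iff.mp h
    have hsub : Ω ⊆ {a | ¬ φ a = 0} := fun x hx => (hφpos x (subset_closure hx)).ne'
    have : μ Ω = 0 := measure_mono_null hsub h0
    rw [hμ, Measure.restrict_apply_self] at this
    exact hΩpos.ne' this
  have hSnn : 0 ≤ S := integral_nonneg (fun x => sq_nonneg _)
  have hSpos : 0 < S := by
    rcases hSnn.eq_or_lt with h | h
    · exfalso
      apply hφne0
      have hz := (integral_eq_zero_iff_of_nonneg (fun x => sq_nonneg (φ x))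
        (hφL2.integrable_sq)).mp h.symm
      filter_upwards [hz] with x hx
      exact (pow_eq_zero_iff two_ne_zero).mp hx
    · exact h
  -- eigenvalue identity: d₂/2 * K + Iβγ = lam * S
  have hfunEq : (fun x => φ x * ∫ y in Ω, J (x - y) * (φ y - φ x)) =
      fun x => ∫ y, H (x, y) ∂μ := by
    funext x
    rw [← integral_const_mul]
    apply integral_congr_ae
    filter_upwards with y
    show φ x * (J (x - y) * (φ y - φ x)) = J (x - y) * (φ y - φ x) * φ x
    ring
  have hP_int : Integrable (fun x => φ x * ∫ y in Ω, J (x - y) * (φ y - φ x)) μ := by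
    rw [hfunEq]; exact hHint.integral_prod_left
  have hP_val : (∫ x in Ω, φ x * ∫ y in Ω, J (x - y) * (φ y - φ x)) =
      ∫ z, H z ∂(μ.prod μ) := by
    rw [hfunEq, ← integral_prod H hHint]
  have hbg2int : Integrable (fun x => (β x - γ x) * φ x ^ 2) μ :=
    hint1 _ (((hβ.1.sub hγ.1)).mul (hφc.pow 2))
  have hEig : d₂ / 2 * K + Iβγ = lam * S := by
    have hQ : (∫ x in Ω, (d₂ * (φ x * ∫ y in Ω, J (x - y) * (φ y - φ x))
        + (β x - γ x) * φ x ^ 2)) = ∫ x in Ω, -lam * φ x ^ 2 := by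
      apply setIntegral_congr_fun hΩm
      intro x hx
      have h := hφeq x hx
      have : φ x * (d₂ * (∫ y in Ω, J (x - y) * (φ y - φ x)) + (β x - γ x) * φ x)
          = φ x * (-lam * φ x) := by rw [h]
      linear_combination this
    rw [integral_add ((hP_int.const_mul d₂)) hbg2int, integral_const_mul,
      integral_const_mul, hP_val] at hQ
    have hIneg : (∫ x in Ω, (β x - γ x) * φ x ^ 2) = - Iβγ := by
      rw [hIdef, ← integral_neg]
      apply integral_congr_ae
      filter_upwards with x
      show (β x - γ x) * φ x ^ 2 = -((γ x - β x) * φ x ^ 2)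
      ring
    rw [hIneg] at hQ
    have hT : (∫ z, H z ∂(μ.prod μ)) = - (K / 2) := by linarith [hK2]
    rw [hT] at hQ
    have : -lam * (∫ x in Ω, φ x ^ 2) = -lam * S := by rw [← hSdef]
    rw [this] at hQ
    linarith
  -- K is strictly positive
  have hKne : K ≠ 0 := by
    intro hK0
    have h0ae : ∀ᵐ z ∂(μ.prod μ), g z = 0 := by
      have := (integral_eq_zero_iff_of_nonneg
        (fun z => mul_nonneg (hJnn _) (sq_nonneg _)) hgint).mp hK0
      filter_upwards [this] with z hz using hz
    have hg0 : ∀ z ∈ Ω ×ˢ Ω, g z = 0 := by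
      intro z hz
      by_contra hne
      have hgc : ContinuousOn g (Ω ×ˢ Ω) :=
        hgcont.mono (Set.prod_mono subset_closure subset_closure)
      have hW : IsOpen ((Ω ×ˢ Ω) ∩ g ⁻¹' {(0:ℝ)}ᶜ) :=
        hgc.isOpen_inter_preimage (hΩo.prod hΩo) isOpen_compl_singleton
      have hWne : ((Ω ×ˢ Ω) ∩ g ⁻¹' {(0:ℝ)}ᶜ).Nonempty := ⟨z, hz, hne⟩
      have hposW : 0 < (volume.prod volume) ((Ω ×ˢ Ω) ∩ g ⁻¹' {(0:ℝ)}ᶜ) :=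
        hW.measure_pos _ hWne
      have hnull : (μ.prod μ) ((Ω ×ˢ Ω) ∩ g ⁻¹' {(0:ℝ)}ᶜ) = 0 := by
        refine measure_mono_null ?_ (ae_iff.mp h0ae)
        intro w hw; exact hw.2
      rw [hprodrw, Measure.restrict_apply' (hΩm.prod hΩm),
        inter_eq_self_of_subset_left inter_subset_left] at hnull
      exact hposW.ne' hnull
    obtain ⟨r, hr, hJr⟩ : ∃ r > 0, ∀ w : Euc n, dist w 0 < r → 0 < J w := by
      have ho : IsOpen {w : Euc n | 0 < J w} := isOpen_lt continuous_const hJc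
      obtain ⟨r, hr, hball⟩ := Metric.isOpen_iff.mp ho 0 hJ0
      exact ⟨r, hr, fun w hw => hball (Metric.mem_ball.mpr hw)⟩
    have hloc : ∀ x ∈ Ω, ∀ y ∈ Ω, dist y x < r → φ y = φ x := by
      intro x hx y hy hd
      have hz := hg0 (x, y) ⟨hx, hy⟩
      have hJp : 0 < J (x - y) := by
        apply hJr
        rw [dist_zero_right, ← dist_eq_norm]
        rwa [dist_comm]
      have hsq : (φ y - φ x) ^ 2 = 0 := by
        have : J (x - y) * (φ y - φ x) ^ 2 = 0 := hz
        rcases mul_eq_zero.mp this with h | h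
        · exact absurd h hJp.ne'
        · exact h
      have := (pow_eq_zero_iff two_ne_zero).mp hsq
      linarith [sub_eq_zero.mp this]
    obtain ⟨x₀, hx₀⟩ := hΩne
    set c := φ x₀ with hcdef
    have hopen : ∀ y ∈ Ω, ∃ s > 0, Metric.ball y s ⊆ Ω ∧
        ∀ z ∈ Metric.ball y s, φ z = φ y := by
      intro y hy
      obtain ⟨s₀, hs₀, hball⟩ := Metric.isOpen_iff.mp hΩo y hy
      have hsub : Metric.ball y (min s₀ r) ⊆ Ω :=
        (Metric.ball_subset_ball (min_le_left _ _)).trans hball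
      refine ⟨min s₀ r, lt_min hs₀ hr, hsub, ?_⟩
      intro z hz
      exact hloc y hy z (hsub hz) (lt_of_lt_of_le (Metric.mem_ball.mp hz) (min_le_right _ _))
    set U : Set (Euc n) := {y | y ∈ Ω ∧ φ y = c} with hUdef
    set V : Set (Euc n) := {y | y ∈ Ω ∧ φ y ≠ c} with hVdef
    have hUopen : IsOpen U := by
      rw [Metric.isOpen_iff]
      intro y hy
      obtain ⟨s, hs, hsub, hconst⟩ := hopen y hy.1
      exact ⟨s, hs, fun z hz => ⟨hsub hz, (hconst z hz).trans hy.2⟩⟩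
    have hVopen : IsOpen V := by
      rw [Metric.isOpen_iff]
      intro y hy
      obtain ⟨s, hs, hsub, hconst⟩ := hopen y hy.1
      exact ⟨s, hs, fun z hz => ⟨hsub hz, (hconst z hz) ▸ hy.2⟩⟩
    have hdisj : Disjoint U V := by
      rw [Set.disjoint_left]
      rintro a ⟨-, ha⟩ ⟨-, hb⟩
      exact hb ha
    have hsubUV : Ω ⊆ U ∪ V := by
      intro a ha
      by_cases h : φ a = c
      · exact Or.inl ⟨ha, h⟩
      · exact Or.inr ⟨ha, h⟩
    have hUne : (Ω ∩ U).Nonempty := ⟨x₀, hx₀, hx₀, rfl⟩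
    have hconstφ : ∀ x ∈ Ω, φ x = c := fun x hx =>
      (hΩconn.isPreconnected.subset_left_of_subset_union hUopen hVopen hdisj hsubUV hUne hx).2
    have hbgconst : ∀ x ∈ Ω, β x - γ x = -lam := by
      intro x hx
      have h0 : (∫ y in Ω, J (x - y) * (φ y - φ x)) = 0 := by
        rw [setIntegral_congr_fun hΩm (g := fun _ => (0:ℝ))
          (fun y hy => by rw [hconstφ y hy, hconstφ x hx]; ring), integral_zero]
      have h := hφeq x hx
      rw [h0, mul_zero, zero_add] at h
      exact mul_right_cancel₀ (hφpos x (subset_closure hx)).ne' h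
    have hcl : ∀ x ∈ closure Ω, β x - γ x = -lam := by
      intro x hx
      haveI : (𝓝[Ω] x).NeBot := mem_closure_iff_nhdsWithin_neBot.mp hx
      have h1 : Tendsto (fun y => β y - γ y) (𝓝[Ω] x) (𝓝 (β x - γ x)) :=
        ((hβ.1.sub hγ.1) x hx).mono_left (nhdsWithin_mono x subset_closure)
      have h2 : Tendsto (fun y => β y - γ y) (𝓝[Ω] x) (𝓝 (-lam)) := by
        refine Tendsto.congr' ?_ tendsto_const_nhds
        filter_upwards [self_mem_nhdsWithin] with y hy
        exact (hbgconst y hy).symm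
      exact tendsto_nhds_unique h1 h2
    exact hnc ⟨-lam, hcl⟩
  have hKpos : 0 < K := lt_of_le_of_ne hKnn (Ne.symm hKne)
  -- lower bound for the Rayleigh set at d₁
  obtain ⟨C, hC⟩ := hclC.exists_bound_of_continuousOn (hγ.1.sub hβ.1)
  have hbdd : BddBelow (rayleighSet J Ω β γ d₁) := by
    refine ⟨-C, ?_⟩
    rintro rv ⟨ψ, hψL2, hψne, rfl⟩
    have hψ2int : Integrable (fun x => ψ x ^ 2) μ := hψL2.integrable_sq
    have hSψnn : 0 ≤ ∫ x in Ω, ψ x ^ 2 := integral_nonneg fun x => sq_nonneg _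
    have hSψpos : 0 < ∫ x in Ω, ψ x ^ 2 := by
      rcases hSψnn.eq_or_lt with h | h
      · exfalso
        apply hψne
        have hz := (integral_eq_zero_iff_of_nonneg (fun x => sq_nonneg (ψ x)) hψ2int).mp h.symm
        filter_upwards [hz] with x hx
        exact (pow_eq_zero_iff two_ne_zero).mp hx
      · exact h
    have hKψnn : 0 ≤ ∫ x in Ω, ∫ y in Ω, J (x - y) * (ψ y - ψ x) ^ 2 :=
      integral_nonneg fun x => integral_nonneg fun y => mul_nonneg (hJnn _) (sq_nonneg _)
    have hIψint : Integrable (fun x => (γ x - β x) * ψ x ^ 2) μ := by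
      refine hψ2int.bdd_mul (c := C)
        (((hγ.1.sub hβ.1).mono subset_closure).aestronglyMeasurable hΩm) ?_
      filter_upwards [ae_restrict_mem hΩm] with x hx
      exact hC x (subset_closure hx)
    have hIψ : -C * (∫ x in Ω, ψ x ^ 2) ≤ ∫ x in Ω, (γ x - β x) * ψ x ^ 2 := by
      rw [← integral_const_mul]
      apply integral_mono_ae (hψ2int.const_mul _) hIψint
      filter_upwards [ae_restrict_mem hΩm] with x hx
      have h1 : -C ≤ γ x - β x := by
        have := hC x (subset_closure hx)
        rw [Real.norm_eq_abs, Pi.sub_apply] at this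
        linarith [(abs_le.mp this).1]
      exact mul_le_mul_of_nonneg_right h1 (sq_nonneg _)
    have hnum : -C * (∫ x in Ω, ψ x ^ 2) ≤
        d₁ / 2 * (∫ x in Ω, ∫ y in Ω, J (x - y) * (ψ y - ψ x) ^ 2)
          + ∫ x in Ω, (γ x - β x) * ψ x ^ 2 := by
      have h1 : 0 ≤ d₁ / 2 * (∫ x in Ω, ∫ y in Ω, J (x - y) * (ψ y - ψ x) ^ 2) :=
        mul_nonneg (by linarith) hKψnn
      linarith
    calc -C = -C * (∫ x in Ω, ψ x ^ 2) / (∫ x in Ω, ψ x ^ 2) := by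
          field_simp
      _ ≤ _ := by
          exact div_le_div_of_nonneg_right hnum hSψnn
  -- conclusion
  have hmem : (d₁ / 2 * (∫ x in Ω, ∫ y in Ω, J (x - y) * (φ y - φ x) ^ 2) + Iβγ) / S ∈
      rayleighSet J Ω β γ d₁ := ⟨φ, hφL2, hφne0, rfl⟩
  have hle : lambdaP J Ω β γ d₁ ≤ (d₁ / 2 * K + Iβγ) / S := by
    have h := csInf_le hbdd hmem
    rwa [hKiter] at h
  have heq2 : lam = (d₂ / 2 * K + Iβγ) / S := by
    rw [hEig, mul_div_assoc, div_self hSpos.ne', mul_one]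
  have hstrict : (d₁ / 2 * K + Iβγ) / S < (d₂ / 2 * K + Iβγ) / S := by
    apply div_lt_div_of_pos_right ?_ hSpos
    have : d₁ / 2 * K < d₂ / 2 * K := by
      apply mul_lt_mul_of_pos_right (by linarith) hKpos
    linarith
  calc lambdaP J Ω β γ d₁ ≤ (d₁ / 2 * K + Iβγ) / S := hle
    _ < (d₂ / 2 * K + Iβγ) / S := hstrict
    _ = lambdaP J Ω β γ d₂ := heq2.symm
end
end

section
/- Assume that for every d > 0 the quantity λ_p(d) is the principal eigenvalue of M_d, i.e. there is a positive continuous eigenfunction φ_d on the closure of Ω with M_d[φ_d](x) = −λ_p(d) φ_d(x) for all x ∈ Ω. Then λ_p(d) → min over x in the closure of Ω of (γ(x) − β(x)) as d → 0⁺. -/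
open MeasureTheory Set Filter Topology

noncomputable section

/-- Every Rayleigh quotient is at least the min of γ - β on the closure,
provided d ≥ 0. -/
lemma rayleigh_lower {n : ℕ} (J : Euc n → ℝ) (Ω : Set (Euc n)) (β γ : Euc n → ℝ)
    (hΩo : IsOpen Ω) (hJnn : ∀ x, 0 ≤ J x)
    (hfc : ContinuousOn (fun x => γ x - β x) (closure Ω))
    (hΩcomp : IsCompact (closure Ω))
    {m : ℝ} (hmle : ∀ x ∈ closure Ω, m ≤ γ x - β x)
    {d : ℝ} (hd : 0 ≤ d) :
    ∀ r ∈ rayleighSet J Ω β γ d, m ≤ r := by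
  rintro r ⟨φ, hφ2, hφne, rfl⟩
  set μ := volume.restrict Ω with hμ
  have hφsq : Integrable (fun x => φ x ^ 2) μ := hφ2.integrable_sq
  -- positivity of denominator
  have hD : 0 < ∫ x in Ω, φ x ^ 2 := by
    rw [integral_pos_iff_support_of_nonneg (fun x => sq_nonneg (φ x)) hφsq]
    have hsupp : (Function.support fun x => φ x ^ 2) = {x | ¬ φ x = 0} := by
      ext x; simp [Function.support, pow_eq_zero_iff]
    rw [hsupp]
    rw [Filter.eventually_iff, mem_ae_iff] at hφne
    · simpa [pos_iff_ne_zero, compl_setOf] using hφne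
  -- integrability of the (γ-β)·φ² term
  obtain ⟨C, hC⟩ := hΩcomp.exists_bound_of_continuousOn hfc
  have hgm : AEMeasurable (fun x => γ x - β x) μ :=
    (hfc.mono subset_closure).aemeasurable hΩo.measurableSet
  have haeΩ : ∀ᵐ x ∂μ, x ∈ Ω := ae_restrict_mem hΩo.measurableSet
  have hint : Integrable (fun x => (γ x - β x) * φ x ^ 2) μ := by
    refine Integrable.mono' (hφsq.const_mul C)
      (hgm.aestronglyMeasurable.mul hφsq.aestronglyMeasurable) ?_
    filter_upwards [haeΩ] with x hx
    have h1 : |γ x - β x| ≤ C := by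
      simpa [Real.norm_eq_abs] using hC x (subset_closure hx)
    have h2 : (0:ℝ) ≤ φ x ^ 2 := sq_nonneg _
    calc ‖(γ x - β x) * φ x ^ 2‖ = |γ x - β x| * φ x ^ 2 := by
          rw [norm_mul, Real.norm_eq_abs, Real.norm_eq_abs, abs_of_nonneg h2]
      _ ≤ C * φ x ^ 2 := mul_le_mul_of_nonneg_right h1 h2
  -- ∫ (γ-β) φ² ≥ m ∫ φ²
  have hIm : m * ∫ x in Ω, φ x ^ 2 ≤ ∫ x in Ω, (γ x - β x) * φ x ^ 2 := by
    have h0 : 0 ≤ ∫ x in Ω, ((γ x - β x) - m) * φ x ^ 2 := by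
      refine integral_nonneg_of_ae ?_
      filter_upwards [haeΩ] with x hx
      exact mul_nonneg (sub_nonneg.2 (hmle x (subset_closure hx))) (sq_nonneg _)
    have heq : (fun x => ((γ x - β x) - m) * φ x ^ 2)
        = fun x => (γ x - β x) * φ x ^ 2 - m * φ x ^ 2 := by
      funext x; ring
    rw [heq, integral_sub hint (hφsq.const_mul m), integral_const_mul] at h0
    linarith
  -- nonnegativity of the quadratic form
  have hQ : 0 ≤ ∫ x in Ω, ∫ y in Ω, J (x - y) * (φ y - φ x) ^ 2 :=
    integral_nonneg fun x => integral_nonneg fun y =>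
      mul_nonneg (hJnn _) (sq_nonneg _)
  rw [le_div_iff₀ hD]
  nlinarith [mul_nonneg (mul_nonneg (div_nonneg hd (by norm_num : (0:ℝ) ≤ 2)) hQ) hD.le,
    mul_nonneg (div_nonneg hd (by norm_num : (0:ℝ) ≤ 2)) hQ]

/-- λ_p(d) → min_{Ω̄} (γ − β) as d → 0⁺. -/
theorem lambdaP_tendsto_zero {n : ℕ} (J : Euc n → ℝ) (Ω : Set (Euc n))
    (β γ : Euc n → ℝ) (hΩ : DomainHyp Ω) (hJ : KernelHyp J Ω)
    (hβ : RateHyp Ω β) (hγ : RateHyp Ω γ)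
    (hpe : ∀ d : ℝ, 0 < d → IsPrincipalEigen J Ω β γ d (lambdaP J Ω β γ d)) :
    Tendsto (fun d => lambdaP J Ω β γ d) (𝓝[>] (0 : ℝ))
      (𝓝 (sInf ((fun x => γ x - β x) '' closure Ω))) := by
  obtain ⟨hΩo, hΩconn, hΩb⟩ := hΩ
  obtain ⟨hJc, hJ00, hJsymm, hJnn, hJint1, -⟩ := hJ
  have hΩne : Ω.Nonempty := hΩconn.nonempty
  have hclne : (closure Ω).Nonempty := hΩne.closure
  have hclcomp : IsCompact (closure Ω) := hΩb.isCompact_closure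
  have hfc : ContinuousOn (fun x => γ x - β x) (closure Ω) := hγ.1.sub hβ.1
  set f : Euc n → ℝ := fun x => γ x - β x with hfdef
  set m : ℝ := sInf (f '' closure Ω) with hmdef
  obtain ⟨x0, hx0, hx0min⟩ := hclcomp.exists_isMinOn hclne hfc
  have hm : m = f x0 := by
    refine IsLeast.csInf_eq ⟨⟨x0, hx0, rfl⟩, ?_⟩
    rintro y ⟨x, hx, rfl⟩
    exact hx0min hx
  have hmle : ∀ x ∈ closure Ω, m ≤ f x := fun x hx => hm ▸ hx0min hx
  -- J is integrable
  have hJint : Integrable J := by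
    by_contra h
    rw [integral_undef h] at hJint1
    norm_num at hJint1
  have hΩfin : volume Ω < ⊤ := hΩb.measure_lt_top
  set A : ℝ := (volume Ω).toReal with hAdef
  have hA0 : 0 ≤ A := ENNReal.toReal_nonneg
  rw [Metric.tendsto_nhdsWithin_nhds]
  intro ε hε
  -- find a point x1 ∈ Ω with f x1 < m + ε/2 and a ball around it
  have hx1ex : ∃ x1, x1 ∈ Ω ∩ f ⁻¹' (Iio (m + ε / 2)) := by
    have hcw : ContinuousWithinAt f (closure Ω) x0 := hfc x0 hx0
    have hmem : f ⁻¹' (Iio (m + ε / 2)) ∈ 𝓝[closure Ω] x0 := by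
      apply hcw
      exact Iio_mem_nhds (by rw [← hm]; linarith)
    have hmem2 : f ⁻¹' (Iio (m + ε / 2)) ∈ 𝓝[Ω] x0 :=
      nhdsWithin_mono x0 subset_closure hmem
    haveI : (𝓝[Ω] x0).NeBot := mem_closure_iff_nhdsWithin_neBot.1 hx0
    exact Filter.nonempty_of_mem (inter_mem self_mem_nhdsWithin hmem2)
  obtain ⟨x1, hx1Ω, hx1f⟩ := hx1ex
  have hUopen : IsOpen (Ω ∩ f ⁻¹' (Iio (m + ε / 2))) :=
    (hfc.mono subset_closure).isOpen_inter_preimage hΩo isOpen_Iio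
  obtain ⟨δ, hδ, hballU⟩ := Metric.isOpen_iff.1 hUopen x1 ⟨hx1Ω, hx1f⟩
  set B : Set (Euc n) := Metric.ball x1 δ with hBdef
  have hBmeas : MeasurableSet B := measurableSet_ball
  have hBΩ : B ⊆ Ω := fun x hx => (hballU hx).1
  have hBf : ∀ x ∈ B, f x < m + ε / 2 := fun x hx => (hballU hx).2
  set vB : ℝ := (volume B).toReal with hvBdef
  have hvB : 0 < vB :=
    ENNReal.toReal_pos (Metric.measure_ball_pos volume x1 hδ).ne' measure_ball_lt_top.ne
  -- the test function
  set φ : Euc n → ℝ := B.indicator (fun _ => (1:ℝ)) with hφdef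
  have hφ01 : ∀ x, φ x = 0 ∨ φ x = 1 := by
    intro x
    by_cases hx : x ∈ B <;> simp [hφdef, indicator, hx]
  have hrB : (volume.restrict Ω) B = volume B := by
    rw [Measure.restrict_apply hBmeas, inter_eq_self_of_subset_left hBΩ]
  have hφmem : MemLp φ 2 (volume.restrict Ω) := by
    refine memLp_indicator_const 2 hBmeas 1 (Or.inr ?_)
    rw [hrB]; exact measure_ball_lt_top.ne
  have hφne : ¬ (∀ᵐ x ∂(volume.restrict Ω), φ x = 0) := by
    intro h
    rw [Filter.eventually_iff, mem_ae_iff] at h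
    have : {x | φ x = 0}ᶜ = B := by
      ext x; by_cases hx : x ∈ B <;> simp [hφdef, indicator, hx]
    rw [this, hrB] at h
    exact (Metric.measure_ball_pos volume x1 hδ).ne' h
  -- the square of φ is the indicator of B
  have hφsq : (fun x => φ x ^ 2) = B.indicator (fun _ => (1:ℝ)) := by
    funext x; by_cases hx : x ∈ B <;> simp [hφdef, indicator, hx]
  have hrestrB : ∀ g : Euc n → ℝ, ∫ x in Ω, B.indicator g x = ∫ x in B, g x := by
    intro g
    rw [integral_indicator hBmeas, Measure.restrict_restrict hBmeas,
      inter_eq_self_of_subset_left hBΩ]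
  -- denominator
  have hDen : ∫ x in Ω, φ x ^ 2 = vB := by
    rw [hφsq, hrestrB, setIntegral_const, smul_eq_mul, mul_one]; rfl
  -- numerator, potential part
  have hIub : ∫ x in Ω, (γ x - β x) * φ x ^ 2 ≤ (m + ε / 2) * vB := by
    have heq : (fun x => (γ x - β x) * φ x ^ 2) = B.indicator f := by
      funext x; by_cases hx : x ∈ B <;> simp [hφdef, hfdef, indicator, hx]
    rw [heq, hrestrB]
    have hclball : closure B ⊆ closure Ω := closure_mono hBΩ
    have hfint : IntegrableOn f B volume := by
      have h1 : ContinuousOn f (Metric.closedBall x1 δ) := by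
        refine hfc.mono ?_
        rw [← closure_ball x1 hδ.ne']
        exact hclball
      exact (h1.integrableOn_compact (isCompact_closedBall x1 δ)).mono_set
        Metric.ball_subset_closedBall
    calc ∫ x in B, f x ≤ ∫ _x in B, (m + ε / 2) :=
          setIntegral_mono_on hfint
            (integrableOn_const measure_ball_lt_top.ne) hBmeas
            (fun x hx => (hBf x hx).le)
      _ = (m + ε / 2) * vB := by
          rw [setIntegral_const, smul_eq_mul, mul_comm]; rfl
  -- numerator, quadratic part
  have hQub : ∫ x in Ω, ∫ y in Ω, J (x - y) * (φ y - φ x) ^ 2 ≤ A := by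
    have hg1 : ∀ x, ∫ y in Ω, J (x - y) * (φ y - φ x) ^ 2 ≤ 1 := by
      intro x
      have hJx : Integrable (fun y => J (x - y)) := hJint.comp_sub_left x
      have h1 : ∫ y in Ω, J (x - y) * (φ y - φ x) ^ 2 ≤ ∫ y in Ω, J (x - y) := by
        refine integral_mono_of_nonneg (ae_of_all _ fun y =>
          mul_nonneg (hJnn _) (sq_nonneg _)) hJx.restrict (ae_of_all _ fun y => ?_)
        have hsq : (φ y - φ x) ^ 2 ≤ 1 := by
          rcases hφ01 x with h | h <;> rcases hφ01 y with h' | h' <;>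
            rw [h, h'] <;> norm_num
        exact mul_le_of_le_one_right (hJnn _) hsq
      have h2 : ∫ y in Ω, J (x - y) ≤ ∫ y, J (x - y) :=
        setIntegral_le_integral hJx (ae_of_all _ fun y => hJnn _)
      have h3 : ∫ y, J (x - y) = 1 := by
        rw [integral_sub_left_eq_self J volume x]; exact hJint1
      linarith
    by_cases hgi : IntegrableOn (fun x => ∫ y in Ω, J (x - y) * (φ y - φ x) ^ 2) Ω volume
    · calc ∫ x in Ω, ∫ y in Ω, J (x - y) * (φ y - φ x) ^ 2
          ≤ ∫ _x in Ω, (1:ℝ) := by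
            refine integral_mono_of_nonneg (ae_of_all _ fun x =>
              integral_nonneg fun y => mul_nonneg (hJnn _) (sq_nonneg _)) ?_
              (ae_of_all _ fun x => hg1 x)
            exact integrableOn_const hΩfin.ne
        _ = A := by rw [setIntegral_const, smul_eq_mul, mul_one]; rfl
    · rw [integral_undef hgi]; exact hA0
  -- conclude
  refine ⟨ε * vB / (2 * (A + 1)), by positivity, ?_⟩
  intro d hd hdist
  have hd0 : 0 < d := hd
  rw [Real.dist_eq, sub_zero, abs_of_pos hd0] at hdist
  set rd : ℝ := (d / 2 * (∫ x in Ω, ∫ y in Ω, J (x - y) * (φ y - φ x) ^ 2)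
      + ∫ x in Ω, (γ x - β x) * φ x ^ 2) / (∫ x in Ω, φ x ^ 2) with hrddef
  have hmemrd : rd ∈ rayleighSet J Ω β γ d := ⟨φ, hφmem, hφne, rfl⟩
  have hbdd : BddBelow (rayleighSet J Ω β γ d) :=
    ⟨m, fun r hr => rayleigh_lower J Ω β γ hΩo hJnn hfc hclcomp hmle hd0.le r hr⟩
  have hlam_ge : m ≤ lambdaP J Ω β γ d :=
    le_csInf ⟨rd, hmemrd⟩ (rayleigh_lower J Ω β γ hΩo hJnn hfc hclcomp hmle hd0.le)
  have hlam_le : lambdaP J Ω β γ d ≤ rd := csInf_le hbdd hmemrd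
  have hQ0 : 0 ≤ ∫ x in Ω, ∫ y in Ω, J (x - y) * (φ y - φ x) ^ 2 :=
    integral_nonneg fun x => integral_nonneg fun y => mul_nonneg (hJnn _) (sq_nonneg _)
  have hrd_lt : rd < m + ε := by
    rw [hrddef, hDen, div_lt_iff₀ hvB]
    have h1 : d / 2 * (∫ x in Ω, ∫ y in Ω, J (x - y) * (φ y - φ x) ^ 2)
        ≤ d / 2 * A := mul_le_mul_of_nonneg_left hQub (by linarith)
    have h4 := mul_lt_mul_of_pos_right hdist (show (0:ℝ) < A + 1 by linarith)
    have heq2 : ε * vB / (2 * (A + 1)) * (A + 1) = ε * vB / 2 := by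
      field_simp
    rw [heq2] at h4
    have h2 : d / 2 * A < ε * vB / 2 := by nlinarith
    nlinarith
  rw [Real.dist_eq, abs_lt]
  constructor <;> linarith [hlam_ge, hlam_le.trans_lt hrd_lt]
end
end

section
/- Let d_I > 0. Suppose (μ_p, φ) with φ ∈ L²(Ω), φ > 0 almost everywhere, satisfies the weighted eigenvalue problem −d_I ∫_Ω J(x−y)(φ(y)−φ(x)) dy + γ(x) φ(x) = μ_p β(x) φ(x) for almost every x ∈ Ω. Then: (a) μ_p > 0; (b) μ_p is the unique such eigenvalue, i.e. if (μ₁, φ₁) and (μ₂, φ₂) are two pairs with positive eigenfunctions solving this problem, then μ₁ = μ₂; (c) μ_p admits the variational characterization μ_p = inf over nonzero ψ ∈ L²(Ω) of [ (d_I/2) ∫_Ω ∫_Ω J(x−y)(ψ(y)−ψ(x))² dy dx + ∫_Ω γ(x) ψ(x)² dx ] / ∫_Ω β(x) ψ(x)² dx. -/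
open MeasureTheory Set Filter Topology

noncomputable section

section Helpers
variable {n : ℕ} {Ω : Set (Euc n)} {J : Euc n → ℝ}

/-- abbreviation for the restricted measure -/

lemma my_finite (hfin : volume Ω < ⊤) : IsFiniteMeasure (volume.restrict Ω) := by
  constructor
  simpa [Measure.restrict_apply_univ] using hfin

lemma mul_int (hfin : volume Ω < ⊤) {f g : Euc n → ℝ}
    (hf : MemLp f 2 (volume.restrict Ω)) (hg : MemLp g 2 (volume.restrict Ω)) :
    Integrable (fun x => f x * g x) (volume.restrict Ω) := by
  haveI := my_finite hfin
  have h1 : Integrable (fun x => f x ^ 2) (volume.restrict Ω) := hf.integrable_sq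
  have h2 : Integrable (fun x => g x ^ 2) (volume.restrict Ω) := hg.integrable_sq
  refine Integrable.mono' (((h1.add h2).const_mul (2⁻¹ : ℝ))) (hf.1.mul hg.1) ?_
  filter_upwards with x
  have : |f x * g x| ≤ 2⁻¹ * (f x ^ 2 + g x ^ 2) := by nlinarith [sq_nonneg (|f x| - |g x|), abs_mul (f x) (g x), sq_abs (f x), sq_abs (g x), abs_nonneg (f x * g x)]
  simpa [Real.norm_eq_abs, abs_mul] using this

lemma int_of_L2 (hfin : volume Ω < ⊤) {f : Euc n → ℝ} (hf : MemLp f 2 (volume.restrict Ω)) :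
    Integrable f (volume.restrict Ω) := by
  haveI := my_finite hfin
  exact hf.integrable one_le_two

lemma bdd_mul_int (hmeas : MeasurableSet Ω) {b f : Euc n → ℝ} {C : ℝ}
    (hb : AEStronglyMeasurable b (volume.restrict Ω)) (hbC : ∀ x ∈ Ω, |b x| ≤ C)
    (hf : Integrable f (volume.restrict Ω)) :
    Integrable (fun x => b x * f x) (volume.restrict Ω) := by
  refine Integrable.mono' (hf.norm.const_mul C) (hb.mul hf.1) ?_
  filter_upwards [ae_restrict_mem hmeas] with x hx
  simp only [Real.norm_eq_abs, abs_mul, norm_norm]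
  exact mul_le_mul_of_nonneg_right (hbC x hx) (abs_nonneg _)

lemma integral_pos_of_ae_pos (hμ : volume Ω ≠ 0) {f : Euc n → ℝ}
    (hf : Integrable f (volume.restrict Ω)) (hpos : ∀ᵐ x ∂(volume.restrict Ω), 0 < f x) :
    0 < ∫ x, f x ∂(volume.restrict Ω) := by
  rcases eq_or_lt_of_le (integral_nonneg_of_ae (hpos.mono fun x hx => hx.le)) with h | h
  · exfalso
    have h0 : f =ᵐ[(volume.restrict Ω)] 0 := (integral_eq_zero_iff_of_nonneg_ae
      (hpos.mono fun x hx => hx.le) hf).mp h.symm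
    have : ∀ᵐ _x ∂(volume.restrict Ω), False := by
      filter_upwards [h0, hpos] with x h1 h2
      rw [h1] at h2; exact lt_irrefl 0 h2
    rw [ae_iff] at this
    simp only [not_false_iff, setOf_true] at this
    rw [Measure.restrict_apply_univ] at this
    exact hμ this
  · exact h
end Helpers
section Helpers2
variable {n : ℕ} {Ω : Set (Euc n)} {J : Euc n → ℝ} {M : ℝ}

lemma prodInt (hJc : Continuous J) (hM : ∀ x ∈ Ω, ∀ y ∈ Ω, |J (x - y)| ≤ M)
    (hmeas : MeasurableSet Ω) {f g : Euc n → ℝ}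
    (hf : Integrable f (volume.restrict Ω)) (hg : Integrable g (volume.restrict Ω)) :
    Integrable (fun p : Euc n × Euc n => J (p.1 - p.2) * (f p.2 * g p.1))
      ((volume.restrict Ω).prod (volume.restrict Ω)) := by
  have hJm : AEStronglyMeasurable (fun p : Euc n × Euc n => J (p.1 - p.2))
      ((volume.restrict Ω).prod (volume.restrict Ω)) :=
    (hJc.comp (continuous_fst.sub continuous_snd)).aestronglyMeasurable
  have hdom : Integrable (fun p : Euc n × Euc n => M * (‖g p.1‖ * ‖f p.2‖))
      ((volume.restrict Ω).prod (volume.restrict Ω)) :=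
    (hg.norm.mul_prod hf.norm).const_mul M
  refine Integrable.mono' hdom (hJm.mul (hf.1.comp_snd.mul hg.1.comp_fst)) ?_
  have hae : ∀ᵐ p ∂((volume.restrict Ω).prod (volume.restrict Ω)), p ∈ Ω ×ˢ Ω := by
    rw [Measure.prod_restrict]
    exact ae_restrict_mem (hmeas.prod hmeas)
  filter_upwards [hae] with p hp
  have h1 := hM p.1 hp.1 p.2 hp.2
  have h2 : (0:ℝ) ≤ M := le_trans (abs_nonneg _) h1
  simp only [Real.norm_eq_abs, abs_mul]
  calc |J (p.1 - p.2)| * (|f p.2| * |g p.1|) ≤ M * (|f p.2| * |g p.1|) := by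
        apply mul_le_mul_of_nonneg_right h1 (by positivity)
    _ = M * (|g p.1| * |f p.2|) := by ring

lemma tmulInt (hJc : Continuous J) (hM : ∀ x ∈ Ω, ∀ y ∈ Ω, |J (x - y)| ≤ M)
    (hmeas : MeasurableSet Ω) {f g : Euc n → ℝ}
    (hf : Integrable f (volume.restrict Ω)) (hg : Integrable g (volume.restrict Ω)) :
    Integrable (fun x => (∫ y in Ω, J (x - y) * f y) * g x) (volume.restrict Ω) := by
  have h := (prodInt hJc hM hmeas hf hg).integral_prod_left
  refine h.congr (Eventually.of_forall fun x => ?_)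
  dsimp only
  rw [← integral_mul_const]
  refine integral_congr_ae (Eventually.of_forall fun y => ?_)
  ring

lemma tswap (hJc : Continuous J) (hJs : ∀ x, J (-x) = J x)
    (hM : ∀ x ∈ Ω, ∀ y ∈ Ω, |J (x - y)| ≤ M)
    (hmeas : MeasurableSet Ω) {f g : Euc n → ℝ}
    (hf : Integrable f (volume.restrict Ω)) (hg : Integrable g (volume.restrict Ω)) :
    ∫ x in Ω, (∫ y in Ω, J (x - y) * f y) * g x
      = ∫ x in Ω, (∫ y in Ω, J (x - y) * g y) * f x := by
  have hsymm : ∀ a b : Euc n, J (b - a) = J (a - b) := fun a b => by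
    rw [← neg_sub a b, hJs]
  have h1 : Integrable (Function.uncurry fun x y => J (x - y) * f y * g x)
      ((volume.restrict Ω).prod (volume.restrict Ω)) := by
    have := prodInt hJc hM hmeas hf hg
    refine this.congr (Eventually.of_forall fun p => ?_)
    simp [Function.uncurry]; ring
  calc ∫ x in Ω, (∫ y in Ω, J (x - y) * f y) * g x
      = ∫ x in Ω, ∫ y in Ω, J (x - y) * f y * g x := by
        refine integral_congr_ae (Eventually.of_forall fun x => ?_)
        dsimp only
        rw [← integral_mul_const]
    _ = ∫ y in Ω, ∫ x in Ω, J (x - y) * f y * g x := integral_integral_swap h1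
    _ = ∫ x in Ω, (∫ y in Ω, J (x - y) * g y) * f x := by
        refine integral_congr_ae (Eventually.of_forall fun a => ?_)
        dsimp only
        rw [← integral_mul_const]
        refine integral_congr_ae (Eventually.of_forall fun b => ?_)
        dsimp only
        rw [hsymm a b]
        ring
end Helpers2
section Helpers3
variable {n : ℕ} {Ω : Set (Euc n)} {J : Euc n → ℝ} {M : ℝ}

lemma Jx_int (hJc : Continuous J) (hM : ∀ x ∈ Ω, ∀ y ∈ Ω, |J (x - y)| ≤ M)
    (hmeas : MeasurableSet Ω) (hfin : volume Ω < ⊤) {x : Euc n} (hx : x ∈ Ω) :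
    Integrable (fun y => J (x - y)) (volume.restrict Ω) := by
  haveI : IsFiniteMeasure (volume.restrict Ω) :=
    ⟨by simpa [Measure.restrict_apply_univ] using hfin⟩
  refine Integrable.mono' (integrable_const M) ?_ ?_
  · exact (hJc.comp (continuous_const.sub continuous_id)).aestronglyMeasurable
  · filter_upwards [ae_restrict_mem hmeas] with y hy
    simpa [Real.norm_eq_abs] using hM x hx y hy

lemma inner_int (hJc : Continuous J) (hM : ∀ x ∈ Ω, ∀ y ∈ Ω, |J (x - y)| ≤ M)
    (hmeas : MeasurableSet Ω) {f : Euc n → ℝ}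
    (hf : Integrable f (volume.restrict Ω)) {x : Euc n} (hx : x ∈ Ω) :
    Integrable (fun y => J (x - y) * f y) (volume.restrict Ω) := by
  refine Integrable.mono' (hf.norm.const_mul M) ?_ ?_
  · exact ((hJc.comp (continuous_const.sub continuous_id)).aestronglyMeasurable).mul hf.1
  · filter_upwards [ae_restrict_mem hmeas] with y hy
    simp only [Real.norm_eq_abs, abs_mul, norm_norm]
    exact mul_le_mul_of_nonneg_right (hM x hx y hy) (abs_nonneg _)

lemma split_inner (hJc : Continuous J) (hM : ∀ x ∈ Ω, ∀ y ∈ Ω, |J (x - y)| ≤ M)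
    (hmeas : MeasurableSet Ω) (hfin : volume Ω < ⊤) {f : Euc n → ℝ}
    (hf : Integrable f (volume.restrict Ω)) {x : Euc n} (hx : x ∈ Ω) :
    ∫ y in Ω, J (x - y) * (f y - f x)
      = (∫ y in Ω, J (x - y) * f y) - (∫ y in Ω, J (x - y)) * f x := by
  have h1 := inner_int hJc hM hmeas hf hx
  have h2 := (Jx_int hJc hM hmeas hfin hx).mul_const (f x)
  have : ∫ y in Ω, J (x - y) * (f y - f x)
      = ∫ y in Ω, (J (x - y) * f y - J (x - y) * f x) := by
    refine integral_congr_ae (Eventually.of_forall fun y => ?_); ring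
  rw [this, integral_sub h1 h2, integral_mul_const]

lemma T1_aesm (hJc : Continuous J) :
    AEStronglyMeasurable (fun x => ∫ y in Ω, J (x - y)) (volume.restrict Ω) := by
  have : AEStronglyMeasurable (fun p : Euc n × Euc n => J (p.1 - p.2))
      ((volume.restrict Ω).prod (volume.restrict Ω)) :=
    (hJc.comp (continuous_fst.sub continuous_snd)).aestronglyMeasurable
  exact this.integral_prod_right'

lemma T1_bound (hM : ∀ x ∈ Ω, ∀ y ∈ Ω, |J (x - y)| ≤ M)
    (hmeas : MeasurableSet Ω) (hfin : volume Ω < ⊤) {x : Euc n} (hx : x ∈ Ω) :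
    |∫ y in Ω, J (x - y)| ≤ M * (volume Ω).toReal := by
  haveI : IsFiniteMeasure (volume.restrict Ω) :=
    ⟨by simpa [Measure.restrict_apply_univ] using hfin⟩
  have h := norm_integral_le_of_norm_le (μ := volume.restrict Ω)
    (f := fun y => J (x - y)) (g := fun _ => M) (integrable_const M) ?_
  · rw [integral_const] at h
    simp only [Real.norm_eq_abs] at h
    calc |∫ y in Ω, J (x - y)| ≤ ((volume.restrict Ω) univ).toReal • M := h
      _ = M * (volume Ω).toReal := by
          rw [Measure.restrict_apply_univ]; simp [mul_comm]
  · filter_upwards [ae_restrict_mem hmeas] with y hy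
    simpa [Real.norm_eq_abs] using hM x hx y hy
end Helpers3
noncomputable section
section Helpers4
variable {n : ℕ} {Ω : Set (Euc n)} {J : Euc n → ℝ} {M : ℝ}

lemma eigen_id (hJc : Continuous J) (hM : ∀ x ∈ Ω, ∀ y ∈ Ω, |J (x - y)| ≤ M)
    (hmeas : MeasurableSet Ω) (hfin : volume Ω < ⊤)
    {β γ : Euc n → ℝ} {dI μ' : ℝ}
    (hγm : AEStronglyMeasurable γ (volume.restrict Ω)) {c₂ : ℝ}
    (hγb : ∀ x ∈ Ω, |γ x| ≤ c₂)
    {φ g : Euc n → ℝ} (hφ : MemLp φ 2 (volume.restrict Ω))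
    (hg : MemLp g 2 (volume.restrict Ω))
    (heig : ∀ᵐ x ∂(volume.restrict Ω),
      -(dI * (∫ y in Ω, J (x - y) * (φ y - φ x))) + γ x * φ x = μ' * β x * φ x) :
    μ' * ∫ x in Ω, β x * (φ x * g x)
      = dI * ((∫ x in Ω, (∫ y in Ω, J (x - y)) * (φ x * g x))
          - ∫ x in Ω, (∫ y in Ω, J (x - y) * φ y) * g x)
        + ∫ x in Ω, γ x * (φ x * g x) := by
  haveI : IsFiniteMeasure (volume.restrict Ω) :=
    ⟨by simpa [Measure.restrict_apply_univ] using hfin⟩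
  have hφi := int_of_L2 hfin hφ
  have hgi := int_of_L2 hfin hg
  have hφg : Integrable (fun x => φ x * g x) (volume.restrict Ω) := mul_int hfin hφ hg
  have h1 : Integrable (fun x => (∫ y in Ω, J (x - y) * φ y) * g x) (volume.restrict Ω) :=
    tmulInt hJc hM hmeas hφi hgi
  have h2' : Integrable (fun x => (∫ y in Ω, J (x - y)) * (φ x * g x)) (volume.restrict Ω) := by
    have h2 := tmulInt hJc hM hmeas (integrable_const (1:ℝ)) hφg
    refine h2.congr (Eventually.of_forall fun x => ?_)
    simp [mul_one]
  have h3 : Integrable (fun x => γ x * (φ x * g x)) (volume.restrict Ω) :=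
    bdd_mul_int hmeas hγm hγb hφg
  have key : ∀ᵐ x ∂(volume.restrict Ω),
      dI * ((∫ y in Ω, J (x - y)) * (φ x * g x))
        - dI * ((∫ y in Ω, J (x - y) * φ y) * g x) + γ x * (φ x * g x)
      = μ' * (β x * (φ x * g x)) := by
    filter_upwards [heig, ae_restrict_mem hmeas] with x hx hxΩ
    have hs := split_inner hJc hM hmeas hfin hφi hxΩ
    linear_combination g x * hx + dI * g x * hs
  have hsplit : ∫ x in Ω, (dI * ((∫ y in Ω, J (x - y)) * (φ x * g x))
        - dI * ((∫ y in Ω, J (x - y) * φ y) * g x) + γ x * (φ x * g x))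
      = dI * (∫ x in Ω, (∫ y in Ω, J (x - y)) * (φ x * g x))
        - dI * (∫ x in Ω, (∫ y in Ω, J (x - y) * φ y) * g x)
        + ∫ x in Ω, γ x * (φ x * g x) := by
    have hA : Integrable (fun x => dI * ((∫ y in Ω, J (x - y)) * (φ x * g x))
        - dI * ((∫ y in Ω, J (x - y) * φ y) * g x)) (volume.restrict Ω) :=
      (h2'.const_mul dI).sub (h1.const_mul dI)
    rw [integral_add hA h3, integral_sub (h2'.const_mul dI) (h1.const_mul dI),
      integral_const_mul, integral_const_mul]
  calc μ' * ∫ x in Ω, β x * (φ x * g x)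
      = ∫ x in Ω, μ' * (β x * (φ x * g x)) := (integral_const_mul _ _).symm
    _ = ∫ x in Ω, (dI * ((∫ y in Ω, J (x - y)) * (φ x * g x))
          - dI * ((∫ y in Ω, J (x - y) * φ y) * g x) + γ x * (φ x * g x)) :=
        (integral_congr_ae key).symm
    _ = _ := by rw [hsplit]; ring
noncomputable section
section Helpers5
variable {n : ℕ} {Ω : Set (Euc n)} {J : Euc n → ℝ} {M : ℝ}

lemma Dexp (hJc : Continuous J) (hJs : ∀ x, J (-x) = J x)
    (hM : ∀ x ∈ Ω, ∀ y ∈ Ω, |J (x - y)| ≤ M)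
    (hmeas : MeasurableSet Ω) (hfin : volume Ω < ⊤)
    {ψ : Euc n → ℝ} (hψ : MemLp ψ 2 (volume.restrict Ω)) :
    ∫ x in Ω, ∫ y in Ω, J (x - y) * (ψ y - ψ x) ^ 2
      = 2 * ((∫ x in Ω, (∫ y in Ω, J (x - y)) * (ψ x * ψ x))
          - ∫ x in Ω, (∫ y in Ω, J (x - y) * ψ y) * ψ x) := by
  haveI : IsFiniteMeasure (volume.restrict Ω) :=
    ⟨by simpa [Measure.restrict_apply_univ] using hfin⟩
  have hψi := int_of_L2 hfin hψ
  have hψ2 : Integrable (fun x => ψ x * ψ x) (volume.restrict Ω) := mul_int hfin hψ hψ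
  -- inner expansion
  have inner_exp : ∀ x ∈ Ω, (∫ y in Ω, J (x - y) * (ψ y - ψ x) ^ 2)
      = (∫ y in Ω, J (x - y) * (ψ y * ψ y))
        - 2 * ((∫ y in Ω, J (x - y) * ψ y) * ψ x)
        + (∫ y in Ω, J (x - y)) * (ψ x * ψ x) := by
    intro x hx
    have e1 := inner_int hJc hM hmeas hψ2 hx
    have e2 := (inner_int hJc hM hmeas hψi hx).mul_const (2 * ψ x)
    have e3 := (Jx_int hJc hM hmeas hfin hx).mul_const (ψ x * ψ x)
    have step : (∫ y in Ω, J (x - y) * (ψ y - ψ x) ^ 2)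
        = ∫ y in Ω, (J (x - y) * (ψ y * ψ y) - (J (x - y) * ψ y) * (2 * ψ x)
            + J (x - y) * (ψ x * ψ x)) := by
      refine integral_congr_ae (Eventually.of_forall fun y => ?_); ring
    have hsub : Integrable (fun y => J (x - y) * (ψ y * ψ y)
        - (J (x - y) * ψ y) * (2 * ψ x)) (volume.restrict Ω) := e1.sub e2
    rw [step, integral_add hsub e3, integral_sub e1 e2, integral_mul_const,
      integral_mul_const]
    ring
  have iA : Integrable (fun x => ∫ y in Ω, J (x - y) * (ψ y * ψ y)) (volume.restrict Ω) := by
    have := tmulInt hJc hM hmeas hψ2 (integrable_const (1:ℝ))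
    refine this.congr (Eventually.of_forall fun x => ?_); simp
  have iB : Integrable (fun x => (∫ y in Ω, J (x - y) * ψ y) * ψ x) (volume.restrict Ω) :=
    tmulInt hJc hM hmeas hψi hψi
  have iC : Integrable (fun x => (∫ y in Ω, J (x - y)) * (ψ x * ψ x)) (volume.restrict Ω) := by
    have := tmulInt hJc hM hmeas (integrable_const (1:ℝ)) hψ2
    refine this.congr (Eventually.of_forall fun x => ?_); simp
  have swapA : (∫ x in Ω, ∫ y in Ω, J (x - y) * (ψ y * ψ y))
      = ∫ x in Ω, (∫ y in Ω, J (x - y)) * (ψ x * ψ x) := by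
    have h := tswap hJc hJs hM hmeas hψ2 (integrable_const (1:ℝ))
    calc (∫ x in Ω, ∫ y in Ω, J (x - y) * (ψ y * ψ y))
        = ∫ x in Ω, (∫ y in Ω, J (x - y) * (ψ y * ψ y)) * (1:ℝ) := by
          refine integral_congr_ae (Eventually.of_forall fun x => ?_); simp
      _ = ∫ x in Ω, (∫ y in Ω, J (x - y) * (1:ℝ)) * (ψ x * ψ x) := h
      _ = ∫ x in Ω, (∫ y in Ω, J (x - y)) * (ψ x * ψ x) := by
          refine integral_congr_ae (Eventually.of_forall fun x => ?_); simp
  calc ∫ x in Ω, ∫ y in Ω, J (x - y) * (ψ y - ψ x) ^ 2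
      = ∫ x in Ω, ((∫ y in Ω, J (x - y) * (ψ y * ψ y))
          - 2 * ((∫ y in Ω, J (x - y) * ψ y) * ψ x)
          + (∫ y in Ω, J (x - y)) * (ψ x * ψ x)) := by
        refine integral_congr_ae ?_
        filter_upwards [ae_restrict_mem hmeas] with x hx
        exact inner_exp x hx
    _ = (∫ x in Ω, ∫ y in Ω, J (x - y) * (ψ y * ψ y))
          - 2 * (∫ x in Ω, (∫ y in Ω, J (x - y) * ψ y) * ψ x)
          + ∫ x in Ω, (∫ y in Ω, J (x - y)) * (ψ x * ψ x) := by
        have hsub : Integrable (fun x => (∫ y in Ω, J (x - y) * (ψ y * ψ y))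
            - 2 * ((∫ y in Ω, J (x - y) * ψ y) * ψ x)) (volume.restrict Ω) :=
          iA.sub (iB.const_mul 2)
        rw [integral_add hsub iC, integral_sub iA (iB.const_mul 2), integral_const_mul]
    _ = _ := by rw [swapA]; ring
end Helpers5
noncomputable section
section Helpers6
variable {n : ℕ} {Ω : Set (Euc n)} {J : Euc n → ℝ} {M : ℝ}

set_option maxHeartbeats 1000000 in
lemma gs (hJc : Continuous J) (hJs : ∀ x, J (-x) = J x) (hJnn : ∀ x, 0 ≤ J x)
    (hM : ∀ x ∈ Ω, ∀ y ∈ Ω, |J (x - y)| ≤ M)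
    (hmeas : MeasurableSet Ω) (hfin : volume Ω < ⊤)
    {β γ : Euc n → ℝ} {dI μp : ℝ} (hdI : 0 < dI)
    (hβm : AEStronglyMeasurable β (volume.restrict Ω))
    (hγm : AEStronglyMeasurable γ (volume.restrict Ω))
    {b₂ c₂ : ℝ} (hβb : ∀ x ∈ Ω, |β x| ≤ b₂) (hγb : ∀ x ∈ Ω, |γ x| ≤ c₂)
    {φ : Euc n → ℝ} (hφ : MemLp φ 2 (volume.restrict Ω))
    (hφpos : ∀ᵐ x ∂(volume.restrict Ω), 0 < φ x)
    (heig : ∀ᵐ x ∂(volume.restrict Ω),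
      -(dI * (∫ y in Ω, J (x - y) * (φ y - φ x))) + γ x * φ x = μp * β x * φ x)
    {θ : Euc n → ℝ} (hθ : MemLp θ 2 (volume.restrict Ω)) :
    dI * ∫ x in Ω, (∫ y in Ω, J (x - y) * θ y) * θ x
      ≤ ∫ x in Ω, (γ x - μp * β x + dI * (∫ y in Ω, J (x - y))) * (θ x * θ x) := by
  haveI : IsFiniteMeasure (volume.restrict Ω) :=
    ⟨by simpa [Measure.restrict_apply_univ] using hfin⟩
  set w : Euc n → ℝ := fun x => γ x - μp * β x + dI * (∫ y in Ω, J (x - y)) with hw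
  set u : Euc n → ℝ := fun x => θ x / φ x with hu
  have hφi := int_of_L2 hfin hφ
  have hθi := int_of_L2 hfin hθ
  have hsymm : ∀ a b : Euc n, J (b - a) = J (a - b) := fun a b => by
    rw [← neg_sub a b, hJs]
  have hw_eig : ∀ᵐ x ∂(volume.restrict Ω),
      dI * (∫ y in Ω, J (x - y) * φ y) = w x * φ x := by
    filter_upwards [heig, ae_restrict_mem hmeas] with x hx hxΩ
    have hs := split_inner hJc hM hmeas hfin hφi hxΩ
    simp only [hw]
    linear_combination (-1 : ℝ) * hx - dI * hs
  have hwm : AEStronglyMeasurable w (volume.restrict Ω) :=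
    (hγm.sub (hβm.const_mul μp)).add ((T1_aesm hJc).const_mul dI)
  set Cw : ℝ := c₂ + |μp| * b₂ + dI * (M * (volume Ω).toReal) with hCw
  have hwb : ∀ x ∈ Ω, |w x| ≤ Cw := by
    intro x hx
    have e1 := hγb x hx
    have e2 := hβb x hx
    have e3 := T1_bound hM hmeas hfin hx
    have e4 : |μp * β x| = |μp| * |β x| := abs_mul _ _
    simp only [hw, hCw]
    rw [abs_le]
    constructor <;>
      nlinarith [le_abs_self (γ x), neg_abs_le (γ x), le_abs_self (μp * β x),
        neg_abs_le (μp * β x), le_abs_self (∫ y in Ω, J (x - y)),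
        neg_abs_le (∫ y in Ω, J (x - y)), abs_nonneg (β x), abs_nonneg μp,
        abs_nonneg (γ x), hdI.le,
        mul_le_mul_of_nonneg_left e2 (abs_nonneg μp),
        mul_le_mul_of_nonneg_left e3 hdI.le]
  have hθ2 : Integrable (fun x => θ x * θ x) (volume.restrict Ω) := mul_int hfin hθ hθ
  have hwθ : Integrable (fun x => w x * (θ x * θ x)) (volume.restrict Ω) :=
    bdd_mul_int hmeas hwm hwb hθ2
  -- the function G
  set G : Euc n → ℝ := fun x => (∫ y in Ω, J (x - y) * φ y) * (φ x * (u x * u x))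
    with hG
  have hGeq : ∀ᵐ x ∂(volume.restrict Ω), G x = (w x / dI) * (θ x * θ x) := by
    filter_upwards [hw_eig, hφpos] with x he hp
    simp only [hG, hu]
    have h1 : (∫ y in Ω, J (x - y) * φ y) = w x * φ x / dI := by
      rw [eq_div_iff hdI.ne']; linarith [he]
    rw [h1]
    field_simp
  have hGint : Integrable G (volume.restrict Ω) := by
    have h0 : Integrable (fun x => (w x / dI) * (θ x * θ x)) (volume.restrict Ω) := by
      refine (hwθ.const_mul dI⁻¹).congr (Eventually.of_forall fun x => ?_)
      ring
    exact h0.congr (hGeq.mono fun _ hx => hx.symm)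
  -- the product functions
  set F : Euc n × Euc n → ℝ :=
    fun p => J (p.1 - p.2) * φ p.2 * (φ p.1 * (u p.1 * u p.1)) with hF
  have hum : AEStronglyMeasurable u (volume.restrict Ω) :=
    (hθ.1.aemeasurable.div hφ.1.aemeasurable).aestronglyMeasurable
  have hJm : AEStronglyMeasurable (fun p : Euc n × Euc n => J (p.1 - p.2))
      ((volume.restrict Ω).prod (volume.restrict Ω)) :=
    (hJc.comp (continuous_fst.sub continuous_snd)).aestronglyMeasurable
  have hFaesm : AEStronglyMeasurable F
      ((volume.restrict Ω).prod (volume.restrict Ω)) := by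
    rw [hF]
    exact (hJm.mul hφ.1.comp_snd).mul ((hφ.1.mul (hum.mul hum)).comp_fst)
  have hFint : Integrable F ((volume.restrict Ω).prod (volume.restrict Ω)) := by
    refine (integrable_prod_iff hFaesm).mpr ⟨?_, ?_⟩
    · simp only [hF]
      filter_upwards [ae_restrict_mem hmeas] with x hx
      exact (inner_int hJc hM hmeas hφi hx).mul_const _
    · have heq : ∀ᵐ x ∂(volume.restrict Ω), G x = ∫ y in Ω, ‖F (x, y)‖ := by
        filter_upwards [hφpos] with x hp
        have hc : 0 ≤ φ x * (u x * u x) := mul_nonneg hp.le (mul_self_nonneg _)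
        have : ∀ᵐ y ∂(volume.restrict Ω),
            ‖F (x, y)‖ = J (x - y) * φ y * (φ x * (u x * u x)) := by
          filter_upwards [hφpos] with y hy
          simp only [hF, Real.norm_eq_abs]
          rw [abs_of_nonneg]
          exact mul_nonneg (mul_nonneg (hJnn _) hy.le) hc
        rw [integral_congr_ae this]
        simp only [hG]
        rw [integral_mul_const]
      exact hGint.congr heq
  have hFswap : Integrable (fun p : Euc n × Euc n => F p.swap)
      ((volume.restrict Ω).prod (volume.restrict Ω)) := hFint.swap
  set H : Euc n × Euc n → ℝ := fun p => J (p.1 - p.2) * (θ p.2 * θ p.1) with hH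
  have hHint : Integrable H ((volume.restrict Ω).prod (volume.restrict Ω)) :=
    prodInt hJc hM hmeas hθi hθi
  -- pointwise AM-GM
  have hq1 : ∀ᵐ p ∂((volume.restrict Ω).prod (volume.restrict Ω)), 0 < φ p.1 :=
    MeasureTheory.Measure.quasiMeasurePreserving_fst.ae hφpos
  have hq2 : ∀ᵐ p ∂((volume.restrict Ω).prod (volume.restrict Ω)), 0 < φ p.2 :=
    MeasureTheory.Measure.quasiMeasurePreserving_snd.ae hφpos
  have hpt : ∀ᵐ p ∂((volume.restrict Ω).prod (volume.restrict Ω)),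
      2 * H p ≤ F p + F p.swap := by
    filter_upwards [hq1, hq2] with p h1 h2
    simp only [hF, hH, hu, Prod.fst_swap, Prod.snd_swap]
    rw [hsymm p.1 p.2]
    set q1 := θ p.1 / φ p.1 with hqq1
    set q2 := θ p.2 / φ p.2 with hqq2
    have ht1 : θ p.1 = q1 * φ p.1 := by rw [hqq1, div_mul_cancel₀ _ h1.ne']
    have ht2 : θ p.2 = q2 * φ p.2 := by rw [hqq2, div_mul_cancel₀ _ h2.ne']
    rw [ht1, ht2]
    nlinarith [mul_nonneg (mul_nonneg (hJnn (p.1 - p.2)) (mul_pos h1 h2).le)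
      (mul_self_nonneg (q1 - q2)), hJnn (p.1 - p.2), mul_pos h1 h2]
  have hsum : Integrable (fun p => F p + F p.swap)
      ((volume.restrict Ω).prod (volume.restrict Ω)) := hFint.add hFswap
  have hmono := integral_mono_ae (hHint.const_mul 2) hsum hpt
  rw [integral_const_mul] at hmono
  have hswap_eq : ∫ p, F p.swap ∂((volume.restrict Ω).prod (volume.restrict Ω))
      = ∫ p, F p ∂((volume.restrict Ω).prod (volume.restrict Ω)) :=
    integral_prod_swap F
  rw [integral_add hFint hFswap, hswap_eq] at hmono
  -- hmono : 2 * ∫ H ≤ ∫ F + ∫ F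
  have hHval : ∫ p, H p ∂((volume.restrict Ω).prod (volume.restrict Ω))
      = ∫ x in Ω, (∫ y in Ω, J (x - y) * θ y) * θ x := by
    rw [integral_prod H hHint]
    refine integral_congr_ae (Eventually.of_forall fun x => ?_)
    simp only [hH]
    rw [← integral_mul_const]
    refine integral_congr_ae (Eventually.of_forall fun y => ?_)
    ring
  have hFval : ∫ p, F p ∂((volume.restrict Ω).prod (volume.restrict Ω))
      = dI⁻¹ * ∫ x in Ω, w x * (θ x * θ x) := by
    rw [integral_prod F hFint]
    have h1 : ∫ x in Ω, (∫ y in Ω, F (x, y)) = ∫ x in Ω, G x := by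
      refine integral_congr_ae (Eventually.of_forall fun x => ?_)
      simp only [hF, hG]
      rw [integral_mul_const]
    rw [h1, integral_congr_ae hGeq, ← integral_const_mul]
    refine integral_congr_ae (Eventually.of_forall fun x => ?_)
    ring
  rw [hHval, hFval] at hmono
  have : dI * ∫ x in Ω, (∫ y in Ω, J (x - y) * θ y) * θ x
      ≤ dI * (dI⁻¹ * ∫ x in Ω, w x * (θ x * θ x)) := by
    nlinarith [hmono, hdI]
  calc dI * ∫ x in Ω, (∫ y in Ω, J (x - y) * θ y) * θ x
      ≤ dI * (dI⁻¹ * ∫ x in Ω, w x * (θ x * θ x)) := this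
    _ = ∫ x in Ω, w x * (θ x * θ x) := by
        rw [← mul_assoc, mul_inv_cancel₀ hdI.ne', one_mul]
end Helpers6

set_option maxHeartbeats 2000000 in
/-- properties of the weighted eigenvalue problem
−d_I ∫_Ω J(x−y)(φ(y)−φ(x)) dy + γ(x)φ(x) = μ β(x) φ(x): positivity, uniqueness and
variational characterization of the principal eigenvalue. -/
theorem weighted_eigenvalue {n : ℕ} (J : Euc n → ℝ) (Ω : Set (Euc n))
    (β γ : Euc n → ℝ) (hΩ : DomainHyp Ω) (hJ : KernelHyp J Ω)
    (hβ : RateHyp Ω β) (hγ : RateHyp Ω γ)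
    (dI : ℝ) (hdI : 0 < dI)
    (μp : ℝ) (φ : Euc n → ℝ)
    (hφmem : MemLp φ 2 (volume.restrict Ω))
    (hφpos : ∀ᵐ x ∂(volume.restrict Ω), 0 < φ x)
    (heig : ∀ᵐ x ∂(volume.restrict Ω),
      -(dI * (∫ y in Ω, J (x - y) * (φ y - φ x))) + γ x * φ x = μp * β x * φ x) :
    0 < μp ∧
    (∀ (μ₁ μ₂ : ℝ) (φ₁ φ₂ : Euc n → ℝ),
      MemLp φ₁ 2 (volume.restrict Ω) → MemLp φ₂ 2 (volume.restrict Ω) →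
      (∀ᵐ x ∂(volume.restrict Ω), 0 < φ₁ x) →
      (∀ᵐ x ∂(volume.restrict Ω), 0 < φ₂ x) →
      (∀ᵐ x ∂(volume.restrict Ω),
        -(dI * (∫ y in Ω, J (x - y) * (φ₁ y - φ₁ x))) + γ x * φ₁ x = μ₁ * β x * φ₁ x) →
      (∀ᵐ x ∂(volume.restrict Ω),
        -(dI * (∫ y in Ω, J (x - y) * (φ₂ y - φ₂ x))) + γ x * φ₂ x = μ₂ * β x * φ₂ x) →
      μ₁ = μ₂) ∧
    μp = sInf { r : ℝ | ∃ ψ : Euc n → ℝ, MemLp ψ 2 (volume.restrict Ω) ∧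
      ¬ (∀ᵐ x ∂(volume.restrict Ω), ψ x = 0) ∧
      r = (dI / 2 * (∫ x in Ω, ∫ y in Ω, J (x - y) * (ψ y - ψ x) ^ 2)
            + ∫ x in Ω, γ x * ψ x ^ 2) / (∫ x in Ω, β x * ψ x ^ 2) } := by
  obtain ⟨hopen, hconn, hbdd⟩ := hΩ
  obtain ⟨hJc, hJ0, hJs, hJnn, hJint, hJne⟩ := hJ
  have hmeas : MeasurableSet Ω := hopen.measurableSet
  have hfin : volume Ω < ⊤ := hbdd.measure_lt_top
  haveI : IsFiniteMeasure (volume.restrict Ω) :=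
    ⟨by simpa [Measure.restrict_apply_univ] using hfin⟩
  have hΩne : Ω.Nonempty := hconn.nonempty
  have hvol0 : volume Ω ≠ 0 := (hopen.measure_pos volume hΩne).ne'
  -- bound for J on differences of points of Ω
  obtain ⟨R, hR⟩ := hbdd.subset_closedBall 0
  have hR0 : (0:ℝ) ≤ R := by
    obtain ⟨x₀, hx₀⟩ := hΩne
    have := hR hx₀
    rw [Metric.mem_closedBall] at this
    exact le_trans dist_nonneg this
  obtain ⟨z, hzmem, hzmax⟩ := (isCompact_closedBall (0 : Euc n) (R + R)).exists_isMaxOn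
    ⟨0, by simp [Metric.mem_closedBall]; linarith⟩ hJc.continuousOn
  set M := J z with hMdef
  have hM : ∀ x ∈ Ω, ∀ y ∈ Ω, |J (x - y)| ≤ M := by
    intro x hx y hy
    rw [abs_of_nonneg (hJnn _)]
    refine hzmax ?_
    rw [Metric.mem_closedBall, dist_zero_right]
    have h1 : ‖x‖ ≤ R := by
      have := hR hx; rwa [Metric.mem_closedBall, dist_zero_right] at this
    have h2 : ‖y‖ ≤ R := by
      have := hR hy; rwa [Metric.mem_closedBall, dist_zero_right] at this
    calc ‖x - y‖ ≤ ‖x‖ + ‖y‖ := norm_sub_le _ _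
      _ ≤ R + R := add_le_add h1 h2
  -- bounds for β and γ
  have hcls : IsCompact (closure Ω) := hbdd.isCompact_closure
  have hclsne : (closure Ω).Nonempty := hΩne.closure
  obtain ⟨xB, hxB, hxBmax⟩ := hcls.exists_isMaxOn hclsne hβ.1
  obtain ⟨xC, hxC, hxCmax⟩ := hcls.exists_isMaxOn hclsne hγ.1
  set b₂ := β xB with hb₂
  set c₂ := γ xC with hc₂
  have hβpos : ∀ x ∈ Ω, 0 < β x := fun x hx => hβ.2 x (subset_closure hx)
  have hγpos : ∀ x ∈ Ω, 0 < γ x := fun x hx => hγ.2 x (subset_closure hx)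
  have hβb : ∀ x ∈ Ω, |β x| ≤ b₂ := fun x hx => by
    rw [abs_of_pos (hβpos x hx)]; exact hxBmax (subset_closure hx)
  have hγb : ∀ x ∈ Ω, |γ x| ≤ c₂ := fun x hx => by
    rw [abs_of_pos (hγpos x hx)]; exact hxCmax (subset_closure hx)
  have hβm : AEStronglyMeasurable β (volume.restrict Ω) :=
    (hβ.1.mono subset_closure).aestronglyMeasurable hmeas
  have hγm : AEStronglyMeasurable γ (volume.restrict Ω) :=
    (hγ.1.mono subset_closure).aestronglyMeasurable hmeas
  -- positivity of the basic integrals for φ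
  have hφφ : Integrable (fun x => φ x * φ x) (volume.restrict Ω) :=
    mul_int hfin hφmem hφmem
  have hBφ : 0 < ∫ x in Ω, β x * (φ x * φ x) := by
    refine integral_pos_of_ae_pos hvol0 (bdd_mul_int hmeas hβm hβb hφφ) ?_
    filter_upwards [hφpos, ae_restrict_mem hmeas] with x h1 h2
    exact mul_pos (hβpos x h2) (mul_pos h1 h1)
  have hCφ : 0 < ∫ x in Ω, γ x * (φ x * φ x) := by
    refine integral_pos_of_ae_pos hvol0 (bdd_mul_int hmeas hγm hγb hφφ) ?_
    filter_upwards [hφpos, ae_restrict_mem hmeas] with x h1 h2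
    exact mul_pos (hγpos x h2) (mul_pos h1 h1)
  -- the core identity for (μp, φ)
  have hID := eigen_id hJc hM hmeas hfin hγm hγb hφmem hφmem heig
  have hDφ := Dexp hJc hJs hM hmeas hfin hφmem
  have hkey : μp * ∫ x in Ω, β x * (φ x * φ x)
      = dI / 2 * (∫ x in Ω, ∫ y in Ω, J (x - y) * (φ y - φ x) ^ 2)
        + ∫ x in Ω, γ x * (φ x * φ x) := by
    rw [hDφ] at *
    linarith [hID]
  have hDφnn : 0 ≤ ∫ x in Ω, ∫ y in Ω, J (x - y) * (φ y - φ x) ^ 2 :=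
    integral_nonneg fun x => integral_nonneg fun y => mul_nonneg (hJnn _) (sq_nonneg _)
  have hμppos : 0 < μp := by
    have h1 : 0 < μp * ∫ x in Ω, β x * (φ x * φ x) := by nlinarith
    by_contra hle
    push_neg at hle
    nlinarith
  refine ⟨hμppos, ?_, ?_⟩
  · -- uniqueness
    intro μ₁ μ₂ φ₁ φ₂ h1mem h2mem h1pos h2pos he1 he2
    have h1i := int_of_L2 hfin h1mem
    have h2i := int_of_L2 hfin h2mem
    have E1 := eigen_id hJc hM hmeas hfin hγm hγb h1mem h2mem he1
    have E2 := eigen_id hJc hM hmeas hfin hγm hγb h2mem h1mem he2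
    have hsw := tswap hJc hJs hM hmeas h1i h2i
    have ec : ∀ f : Euc n → ℝ, (∫ x in Ω, f x * (φ₂ x * φ₁ x))
        = ∫ x in Ω, f x * (φ₁ x * φ₂ x) := fun f =>
      integral_congr_ae (Eventually.of_forall fun x => by ring)
    rw [ec β, ec γ, ec (fun x => ∫ y in Ω, J (x - y))] at E2
    rw [hsw] at E1
    have hP : 0 < ∫ x in Ω, β x * (φ₁ x * φ₂ x) := by
      refine integral_pos_of_ae_pos hvol0
        (bdd_mul_int hmeas hβm hβb (mul_int hfin h1mem h2mem)) ?_
      filter_upwards [h1pos, h2pos, ae_restrict_mem hmeas] with x k1 k2 k3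
      exact mul_pos (hβpos x k3) (mul_pos k1 k2)
    have : μ₁ * ∫ x in Ω, β x * (φ₁ x * φ₂ x) = μ₂ * ∫ x in Ω, β x * (φ₁ x * φ₂ x) := by
      rw [E1, E2]
    exact mul_right_cancel₀ hP.ne' this
  · -- variational characterization
    set S := { r : ℝ | ∃ ψ : Euc n → ℝ, MemLp ψ 2 (volume.restrict Ω) ∧
      ¬ (∀ᵐ x ∂(volume.restrict Ω), ψ x = 0) ∧
      r = (dI / 2 * (∫ x in Ω, ∫ y in Ω, J (x - y) * (ψ y - ψ x) ^ 2)
            + ∫ x in Ω, γ x * ψ x ^ 2) / (∫ x in Ω, β x * ψ x ^ 2) } with hS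
    have epow : ∀ f g : Euc n → ℝ, (∫ x in Ω, f x * g x ^ 2)
        = ∫ x in Ω, f x * (g x * g x) := fun f g =>
      integral_congr_ae (Eventually.of_forall fun x => by ring)
    -- membership
    have hmem : μp ∈ S := by
      refine ⟨φ, hφmem, ?_, ?_⟩
      · intro hcon
        have : ∀ᵐ _x ∂(volume.restrict Ω), False := by
          filter_upwards [hcon, hφpos] with x e1 e2
          rw [e1] at e2; exact lt_irrefl 0 e2
        rw [ae_iff] at this
        simp only [not_false_iff, setOf_true] at this
        rw [Measure.restrict_apply_univ] at this
        exact hvol0 this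
      · rw [epow γ φ, epow β φ, eq_div_iff hBφ.ne']
        linarith [hkey]
    -- lower bound
    have hlb : ∀ r ∈ S, μp ≤ r := by
      rintro r ⟨ψ, hψmem, hψne, rfl⟩
      have hψi := int_of_L2 hfin hψmem
      have hψψ : Integrable (fun x => ψ x * ψ x) (volume.restrict Ω) :=
        mul_int hfin hψmem hψmem
      -- positivity of denominator
      have hBψ : 0 < ∫ x in Ω, β x * (ψ x * ψ x) := by
        have hint : Integrable (fun x => β x * (ψ x * ψ x)) (volume.restrict Ω) :=
          bdd_mul_int hmeas hβm hβb hψψ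
        have hnn : ∀ᵐ x ∂(volume.restrict Ω), 0 ≤ β x * (ψ x * ψ x) := by
          filter_upwards [ae_restrict_mem hmeas] with x hx
          exact mul_nonneg (hβpos x hx).le (mul_self_nonneg _)
        rcases eq_or_lt_of_le (integral_nonneg_of_ae hnn) with h0 | h0
        · exfalso
          have hz := (integral_eq_zero_iff_of_nonneg_ae hnn hint).mp h0.symm
          refine hψne ?_
          filter_upwards [hz, ae_restrict_mem hmeas] with x e1 e2
          rcases mul_eq_zero.mp e1 with h | h
          · exact absurd h (hβpos x e2).ne'
          · exact mul_self_eq_zero.mp h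
        · exact h0
      -- the ground state inequality
      set θ : Euc n → ℝ := fun x => ‖ψ x‖ with hθdef
      have hθmem : MemLp θ 2 (volume.restrict Ω) := hψmem.norm
      have hθi := int_of_L2 hfin hθmem
      have hgs := gs hJc hJs hJnn hM hmeas hfin hdI hβm hγm hβb hγb
        hφmem hφpos heig hθmem
      have hmono : ∫ x in Ω, (∫ y in Ω, J (x - y) * ψ y) * ψ x
          ≤ ∫ x in Ω, (∫ y in Ω, J (x - y) * θ y) * θ x := by
        refine integral_mono_ae (tmulInt hJc hM hmeas hψi hψi)
          (tmulInt hJc hM hmeas hθi hθi) (Eventually.of_forall fun x => ?_)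
        have h1 : |∫ y in Ω, J (x - y) * ψ y| ≤ ∫ y in Ω, J (x - y) * θ y := by
          calc |∫ y in Ω, J (x - y) * ψ y| ≤ ∫ y in Ω, ‖J (x - y) * ψ y‖ := by
                simpa [Real.norm_eq_abs] using
                  norm_integral_le_integral_norm (μ := volume.restrict Ω)
                    (f := fun y => J (x - y) * ψ y)
            _ = ∫ y in Ω, J (x - y) * θ y := by
                refine integral_congr_ae (Eventually.of_forall fun y => ?_)
                simp [hθdef, Real.norm_eq_abs, abs_mul, abs_of_nonneg (hJnn (x - y))]
        calc (∫ y in Ω, J (x - y) * ψ y) * ψ x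
            ≤ |(∫ y in Ω, J (x - y) * ψ y) * ψ x| := le_abs_self _
          _ = |∫ y in Ω, J (x - y) * ψ y| * |ψ x| := abs_mul _ _
          _ ≤ (∫ y in Ω, J (x - y) * θ y) * θ x := by
              simp only [hθdef, Real.norm_eq_abs]
              exact mul_le_mul_of_nonneg_right h1 (abs_nonneg _)
      have hθθψψ : ∫ x in Ω, (γ x - μp * β x + dI * (∫ y in Ω, J (x - y))) * (θ x * θ x)
          = ∫ x in Ω, (γ x - μp * β x + dI * (∫ y in Ω, J (x - y))) * (ψ x * ψ x) := by
        refine integral_congr_ae (Eventually.of_forall fun x => ?_)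
        simp only [hθdef, Real.norm_eq_abs, abs_mul_abs_self]
      rw [hθθψψ] at hgs
      -- expand the w-integral
      have hT1ψψ : Integrable (fun x => (∫ y in Ω, J (x - y)) * (ψ x * ψ x))
          (volume.restrict Ω) := by
        have := tmulInt hJc hM hmeas (integrable_const (1:ℝ)) hψψ
        refine this.congr (Eventually.of_forall fun x => ?_); simp
      have hγψ : Integrable (fun x => γ x * (ψ x * ψ x)) (volume.restrict Ω) :=
        bdd_mul_int hmeas hγm hγb hψψ
      have hβψ : Integrable (fun x => β x * (ψ x * ψ x)) (volume.restrict Ω) :=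
        bdd_mul_int hmeas hβm hβb hψψ
      have hwsplit : ∫ x in Ω, (γ x - μp * β x + dI * (∫ y in Ω, J (x - y))) * (ψ x * ψ x)
          = (∫ x in Ω, γ x * (ψ x * ψ x)) - μp * (∫ x in Ω, β x * (ψ x * ψ x))
            + dI * ∫ x in Ω, (∫ y in Ω, J (x - y)) * (ψ x * ψ x) := by
        have e1 : (fun x => (γ x - μp * β x + dI * (∫ y in Ω, J (x - y))) * (ψ x * ψ x))
            = fun x => (γ x * (ψ x * ψ x) - μp * (β x * (ψ x * ψ x)))
              + dI * ((∫ y in Ω, J (x - y)) * (ψ x * ψ x)) := by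
          funext x; ring
        have hA : Integrable (fun x => γ x * (ψ x * ψ x) - μp * (β x * (ψ x * ψ x)))
            (volume.restrict Ω) := hγψ.sub (hβψ.const_mul μp)
        rw [e1, integral_add hA (hT1ψψ.const_mul dI),
          integral_sub hγψ (hβψ.const_mul μp), integral_const_mul, integral_const_mul]
      rw [hwsplit] at hgs
      have hDψ := Dexp hJc hJs hM hmeas hfin hψmem
      -- conclude
      rw [epow γ ψ, epow β ψ, le_div_iff₀ hBψ, hDψ]
      linarith [hgs, mul_le_mul_of_nonneg_left hmono hdI.le]
    have hbdd' : BddBelow S := ⟨μp, fun r hr => hlb r hr⟩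
    exact le_antisymm (le_csInf ⟨μp, hmem⟩ hlb) (csInf_le hbdd' hmem)
end
end
end Helpers4
end
end
end

section
/- Let d_S, d_I > 0 and N > 0, and let S̃, Ĩ be nonnegative continuous functions on the closure of Ω, not both identically zero. Then (S̃, Ĩ) is a solution of the stationary system d_S ∫_Ω J(x−y)(S̃(y)−S̃(x)) dy = β(x)S̃Ĩ/(S̃+Ĩ) − γ(x)Ĩ and d_I ∫_Ω J(x−y)(Ĩ(y)−Ĩ(x)) dy = −β(x)S̃Ĩ/(S̃+Ĩ) + γ(x)Ĩ in Ω with ∫_Ω (S̃(x)+Ĩ(x)) dx = N, if and only if there is a positive constant k such that d_S S̃(x) + d_I Ĩ(x) = k for all x ∈ Ω, Ĩ satisfies the single equation d_I ∫_Ω J(x−y)(Ĩ(y)−Ĩ(x)) dy + β(x)S̃Ĩ/(S̃+Ĩ) − γ(x)Ĩ = 0 in Ω, and ∫_Ω (S̃(x)+Ĩ(x)) dx = N. -/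
open MeasureTheory Set Filter Topology

noncomputable section

/-- The nonlinear incidence s·i/(s+i), set to 0 when s = 0 or i = 0. -/
def incid (s i : ℝ) : ℝ := if s = 0 ∨ i = 0 then 0 else s * i / (s + i)

/-- (S, I) is a (classical, continuous) solution of the nonlocal SIS system on Ω. -/
def IsSISsol {n : ℕ} (J : Euc n → ℝ) (Ω : Set (Euc n)) (β γ : Euc n → ℝ)
    (dS dI : ℝ) (S I : Euc n → ℝ → ℝ) : Prop :=
  ContinuousOn (fun p : Euc n × ℝ => S p.1 p.2) (closure Ω ×ˢ Ici (0 : ℝ)) ∧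
  ContinuousOn (fun p : Euc n × ℝ => I p.1 p.2) (closure Ω ×ˢ Ici (0 : ℝ)) ∧
  (∀ x ∈ Ω, ∀ t : ℝ, 0 < t →
    HasDerivAt (fun τ => S x τ)
      (dS * (∫ y in Ω, J (x - y) * (S y t - S x t))
        - β x * incid (S x t) (I x t) + γ x * I x t) t) ∧
  (∀ x ∈ Ω, ∀ t : ℝ, 0 < t →
    HasDerivAt (fun τ => I x τ)
      (dI * (∫ y in Ω, J (x - y) * (I y t - I x t))
        + β x * incid (S x t) (I x t) - γ x * I x t) t)

/-- (S, I) is a stationary solution of the nonlocal SIS system with total mass N. -/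
def IsStatSol {n : ℕ} (J : Euc n → ℝ) (Ω : Set (Euc n)) (β γ : Euc n → ℝ)
    (dS dI N : ℝ) (S I : Euc n → ℝ) : Prop :=
  (∀ x ∈ Ω, dS * (∫ y in Ω, J (x - y) * (S y - S x))
      = β x * incid (S x) (I x) - γ x * I x) ∧
  (∀ x ∈ Ω, dI * (∫ y in Ω, J (x - y) * (I y - I x))
      = -(β x * incid (S x) (I x)) + γ x * I x) ∧
  (∫ x in Ω, (S x + I x)) = N


lemma integrableOn_cc {n : ℕ} {Ω : Set (Euc n)} (hΩ : Bornology.IsBounded Ω)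
    {f : Euc n → ℝ} (hf : ContinuousOn f (closure Ω)) : IntegrableOn f Ω := by
  have hc : IsCompact (closure Ω) :=
    Metric.isCompact_of_isClosed_isBounded isClosed_closure hΩ.closure
  exact (hf.integrableOn_compact hc).mono_set subset_closure

lemma integrableOn_ker {n : ℕ} {Ω : Set (Euc n)} (hΩ : Bornology.IsBounded Ω)
    {J : Euc n → ℝ} (hJ : Continuous J) {g : Euc n → ℝ}
    (hg : ContinuousOn g (closure Ω)) (x : Euc n) :
    IntegrableOn (fun y => J (x - y) * g y) Ω :=
  integrableOn_cc hΩ (((hJ.comp (continuous_const.sub continuous_id)).continuousOn).mul hg)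

lemma split_int {n : ℕ} {Ω : Set (Euc n)} (hΩ : Bornology.IsBounded Ω)
    {J : Euc n → ℝ} (hJ : Continuous J) {g : Euc n → ℝ}
    (hg : ContinuousOn g (closure Ω)) (x : Euc n) (c : ℝ) :
    (∫ y in Ω, J (x - y) * (g y - c))
      = (∫ y in Ω, J (x - y) * g y) - (∫ y in Ω, J (x - y)) * c := by
  have h1 : IntegrableOn (fun y => J (x - y) * g y) Ω := integrableOn_ker hΩ hJ hg x
  have h0 : IntegrableOn (fun y => J (x - y)) Ω :=
    integrableOn_cc hΩ (hJ.comp (continuous_const.sub continuous_id)).continuousOn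
  have h2 : IntegrableOn (fun y => J (x - y) * c) Ω := h0.mul_const c
  have : (fun y => J (x - y) * (g y - c)) = fun y => J (x - y) * g y - J (x - y) * c := by
    funext y; ring
  rw [this, integral_sub h1 h2, integral_mul_const]

lemma combo_int {n : ℕ} {Ω : Set (Euc n)} (hΩ : Bornology.IsBounded Ω)
    {J : Euc n → ℝ} (hJ : Continuous J) {S I : Euc n → ℝ}
    (hS : ContinuousOn S (closure Ω)) (hI : ContinuousOn I (closure Ω))
    (dS dI : ℝ) (x : Euc n) :
    (∫ y in Ω, J (x - y) * ((dS * S y + dI * I y) - (dS * S x + dI * I x)))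
      = dS * (∫ y in Ω, J (x - y) * (S y - S x))
        + dI * (∫ y in Ω, J (x - y) * (I y - I x)) := by
  have h1 : IntegrableOn (fun y => J (x - y) * (S y - S x)) Ω :=
    integrableOn_ker hΩ hJ (hS.sub continuousOn_const) x
  have h2 : IntegrableOn (fun y => J (x - y) * (I y - I x)) Ω :=
    integrableOn_ker hΩ hJ (hI.sub continuousOn_const) x
  have : (fun y => J (x - y) * ((dS * S y + dI * I y) - (dS * S x + dI * I x)))
      = fun y => dS * (J (x - y) * (S y - S x)) + dI * (J (x - y) * (I y - I x)) := by
    funext y; ring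
  rw [this, integral_add (h1.const_mul dS) (h2.const_mul dI),
    integral_const_mul, integral_const_mul]

lemma continuous_conv {n : ℕ} {Ω : Set (Euc n)} (hΩb : Bornology.IsBounded Ω)
    (hΩm : MeasurableSet Ω) {J : Euc n → ℝ} (hJ : Continuous J)
    {g : Euc n → ℝ} (hg : ContinuousOn g (closure Ω)) :
    Continuous (fun x => ∫ y in Ω, J (x - y) * g y) := by
  rw [continuous_iff_continuousAt]
  intro x
  obtain ⟨R, hR⟩ := hΩb.subset_closedBall 0
  have hK : IsCompact (Metric.closedBall (0 : Euc n) (‖x‖ + 1 + R)) :=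
    isCompact_closedBall _ _
  obtain ⟨C, hC⟩ := hK.exists_bound_of_continuousOn hJ.continuousOn
  have hgmeas : AEStronglyMeasurable g (volume.restrict Ω) :=
    (hg.mono subset_closure).aestronglyMeasurable hΩm
  apply continuousAt_of_dominated (bound := fun y => C * ‖g y‖)
  · refine Filter.Eventually.of_forall fun x' => ?_
    exact ((hJ.comp (continuous_const.sub continuous_id)).aestronglyMeasurable).mul hgmeas
  · filter_upwards [Metric.ball_mem_nhds x one_pos] with x' hx'
    refine (ae_restrict_iff' hΩm).2 (Filter.Eventually.of_forall fun y hy => ?_)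
    have h1 : x' - y ∈ Metric.closedBall (0 : Euc n) (‖x‖ + 1 + R) := by
      have hy' : ‖y‖ ≤ R := by
        simpa [Metric.mem_closedBall, dist_zero_right] using hR hy
      have hx'' : ‖x'‖ ≤ ‖x‖ + 1 := by
        have h := Metric.mem_ball.1 hx'
        have h2 : ‖x' - x‖ < 1 := by simpa [dist_eq_norm] using h
        calc ‖x'‖ = ‖x' - x + x‖ := by rw [sub_add_cancel]
          _ ≤ ‖x' - x‖ + ‖x‖ := norm_add_le _ _
          _ ≤ ‖x‖ + 1 := by linarith
      simp only [Metric.mem_closedBall, dist_zero_right]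
      calc ‖x' - y‖ ≤ ‖x'‖ + ‖y‖ := norm_sub_le _ _
        _ ≤ ‖x‖ + 1 + R := by linarith
    calc ‖J (x' - y) * g y‖ = ‖J (x' - y)‖ * ‖g y‖ := norm_mul _ _
      _ ≤ C * ‖g y‖ := mul_le_mul_of_nonneg_right (hC _ h1) (norm_nonneg _)
  · exact ((integrableOn_cc hΩb hg).norm.const_mul C)
  · exact Filter.Eventually.of_forall fun y =>
      ((hJ.comp (continuous_id.sub continuous_const)).mul continuous_const).continuousAt

lemma propagation {n : ℕ} {Ω : Set (Euc n)} (hΩo : IsOpen Ω)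
    (hΩb : Bornology.IsBounded Ω)
    {J : Euc n → ℝ} (hJc : Continuous J) (hJnn : ∀ x, 0 ≤ J x)
    {W : Euc n → ℝ} (hW : ContinuousOn W (closure Ω))
    {M : ℝ} (hM : ∀ y ∈ closure Ω, W y ≤ M)
    {r : ℝ} (hJr : ∀ z ∈ Metric.ball (0 : Euc n) r, 0 < J z)
    {z : Euc n}
    (heq : (∫ y in Ω, J (z - y) * (W y - M)) = 0) :
    ∀ y ∈ Ω ∩ Metric.ball z r, W y = M := by
  have hΩm : MeasurableSet Ω := hΩo.measurableSet
  set f : Euc n → ℝ := fun y => J (z - y) * (M - W y) with hf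
  have heq' : (∫ y in Ω, f y) = 0 := by
    have hfn : f = fun y => -(J (z - y) * (W y - M)) := by funext y; rw [hf]; ring
    rw [hfn, integral_neg, heq, neg_zero]
  have hfc : ContinuousOn f (closure Ω) :=
    ((hJc.comp (continuous_const.sub continuous_id)).continuousOn).mul
      (continuousOn_const.sub hW)
  have hfi : IntegrableOn f Ω := integrableOn_cc hΩb hfc
  have hfnn : 0 ≤ᵐ[volume.restrict Ω] f := by
    refine (ae_restrict_iff' hΩm).2 (Filter.Eventually.of_forall fun y hy => ?_)
    exact mul_nonneg (hJnn _) (sub_nonneg.2 (hM y (subset_closure hy)))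
  have hae : f =ᵐ[volume.restrict Ω] 0 :=
    (integral_eq_zero_iff_of_nonneg_ae hfnn hfi).1 heq'
  intro y hy
  by_contra hne
  have hylt : W y < M := lt_of_le_of_ne (hM y (subset_closure hy.1)) hne
  set V : Set (Euc n) := (Ω ∩ W ⁻¹' (Iio M)) ∩ Metric.ball z r with hV
  have hVopen : IsOpen V :=
    ((hW.mono subset_closure).isOpen_inter_preimage hΩo isOpen_Iio).inter
      Metric.isOpen_ball
  have hVne : V.Nonempty := ⟨y, ⟨⟨hy.1, hylt⟩, hy.2⟩⟩
  have hVpos : 0 < volume V := hVopen.measure_pos _ hVne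
  have hVsub : V ⊆ {y | f y ≠ 0} := by
    intro w hw
    have h1 : 0 < J (z - w) := by
      apply hJr
      have : dist z w < r := Metric.mem_ball'.1 hw.2
      simpa [Metric.mem_ball, dist_zero_right, dist_eq_norm] using this
    have h2 : 0 < M - W w := sub_pos.2 hw.1.2
    exact ne_of_gt (mul_pos h1 h2)
  have hnull : volume.restrict Ω {y | f y ≠ 0} = 0 := by
    have h := hae
    rw [Filter.EventuallyEq, ae_iff] at h
    simpa using h
  have hV0 : volume V = 0 := by
    have hsub : V ⊆ {y | f y ≠ 0} ∩ Ω := fun w hw => ⟨hVsub hw, hw.1.1⟩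
    have hle : volume V ≤ volume.restrict Ω {y | f y ≠ 0} := by
      rw [Measure.restrict_apply₀' hΩm.nullMeasurableSet]
      exact measure_mono hsub
    exact le_antisymm (hnull ▸ hle) zero_le
  exact absurd hV0 (ne_of_gt hVpos)

/-- equivalence between the stationary SIS system and the reduced system
with d_S S̃ + d_I Ĩ constant. -/
theorem stationary_equiv {n : ℕ} (J : Euc n → ℝ) (Ω : Set (Euc n))
    (β γ : Euc n → ℝ) (hΩ : DomainHyp Ω) (hJ : KernelHyp J Ω)
    (hβ : RateHyp Ω β) (hγ : RateHyp Ω γ)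
    (dS dI N : ℝ) (hdS : 0 < dS) (hdI : 0 < dI) (hN : 0 < N)
    (S I : Euc n → ℝ)
    (hScont : ContinuousOn S (closure Ω)) (hIcont : ContinuousOn I (closure Ω))
    (hSnonneg : ∀ x ∈ closure Ω, 0 ≤ S x) (hInonneg : ∀ x ∈ closure Ω, 0 ≤ I x)
    (hnz : ¬ ∀ x ∈ closure Ω, S x = 0 ∧ I x = 0) :
    IsStatSol J Ω β γ dS dI N S I ↔
      ((∃ k : ℝ, 0 < k ∧ ∀ x ∈ Ω, dS * S x + dI * I x = k) ∧
       (∀ x ∈ Ω, dI * (∫ y in Ω, J (x - y) * (I y - I x))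
          + β x * incid (S x) (I x) - γ x * I x = 0) ∧
       (∫ x in Ω, (S x + I x)) = N) := by
  obtain ⟨hΩo, hΩc, hΩb⟩ := hΩ
  obtain ⟨hJc, hJ0, hJsymm, hJnn, hJint, hJne⟩ := hJ
  have hΩm : MeasurableSet Ω := hΩo.measurableSet
  constructor
  · rintro ⟨h1, h2, h3⟩
    refine ⟨?_, fun x hx => by linarith [h2 x hx], h3⟩
    set W : Euc n → ℝ := fun x => dS * S x + dI * I x with hWdef
    have hWc : ContinuousOn W (closure Ω) :=
      (continuousOn_const.mul hScont).add (continuousOn_const.mul hIcont)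
    have hWnn : ∀ x ∈ closure Ω, 0 ≤ W x := fun x hx =>
      add_nonneg (mul_nonneg hdS.le (hSnonneg x hx)) (mul_nonneg hdI.le (hInonneg x hx))
    -- the sum of the two equations
    have hsum : ∀ x ∈ Ω, (∫ y in Ω, J (x - y) * (W y - W x)) = 0 := by
      intro x hx
      have hc : (∫ y in Ω, J (x - y) * (W y - W x))
          = dS * (∫ y in Ω, J (x - y) * (S y - S x))
            + dI * (∫ y in Ω, J (x - y) * (I y - I x)) :=
        combo_int hΩb hJc hScont hIcont dS dI x
      rw [hc]
      linarith [h1 x hx, h2 x hx]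
    -- the auxiliary continuous functions F and a
    set F : Euc n → ℝ := fun x => ∫ y in Ω, J (x - y) * W y with hFdef
    set a : Euc n → ℝ := fun x => ∫ y in Ω, J (x - y) with hadef
    have hFc : Continuous F := continuous_conv hΩb hΩm hJc hWc
    have hac : Continuous a := by
      have h := continuous_conv hΩb hΩm hJc (continuousOn_const (c := (1 : ℝ)))
      simpa [hadef, mul_one] using h
    have hG0 : ∀ x ∈ Ω, F x - a x * W x = 0 := by
      intro x hx
      have hs := split_int hΩb hJc hWc x (W x)
      have h0 := hsum x hx
      rw [hs] at h0
      linarith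
    -- maximum of W on the closure
    have hcc : IsCompact (closure Ω) :=
      Metric.isCompact_of_isClosed_isBounded isClosed_closure hΩb.closure
    have hclne : (closure Ω).Nonempty := hΩc.nonempty.closure
    obtain ⟨x0, hx0cl, hx0max⟩ := hcc.exists_isMaxOn hclne hWc
    set M : ℝ := W x0 with hMdef
    have hMle : ∀ y ∈ closure Ω, W y ≤ M := fun y hy => hx0max hy
    -- radius of positivity of J
    obtain ⟨r, hr, hJr⟩ : ∃ r > 0, ∀ z ∈ Metric.ball (0 : Euc n) r, 0 < J z := by
      have hopen : IsOpen (J ⁻¹' Ioi 0) := isOpen_Ioi.preimage hJc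
      obtain ⟨r, hr, hsub⟩ := Metric.isOpen_iff.1 hopen 0 hJ0
      exact ⟨r, hr, fun z hz => hsub hz⟩
    -- limit argument: equation holds at x0
    have hGx0 : F x0 - a x0 * W x0 = 0 := by
      have hnb : (𝓝[Ω] x0).NeBot := mem_closure_iff_nhdsWithin_neBot.1 hx0cl
      have ht1 : Tendsto (fun x => F x - a x * W x) (𝓝[Ω] x0)
          (𝓝 (F x0 - a x0 * W x0)) := by
        have hWwa : ContinuousWithinAt W Ω x0 := (hWc x0 hx0cl).mono subset_closure
        exact (hFc.continuousWithinAt.sub (hac.continuousWithinAt.mul hWwa))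
      have ht2 : Tendsto (fun x => F x - a x * W x) (𝓝[Ω] x0) (𝓝 0) := by
        refine Tendsto.congr' ?_ tendsto_const_nhds
        exact eventually_nhdsWithin_of_forall fun x hx => (hG0 x hx).symm
      exact tendsto_nhds_unique ht1 ht2
    -- equation for propagation at any z in closure with W z = M and F z - a z * M = 0
    have hprop : ∀ z ∈ closure Ω, F z - a z * M = 0 →
        ∀ y ∈ Ω ∩ Metric.ball z r, W y = M := by
      intro z hz hz0
      have heqz : (∫ y in Ω, J (z - y) * (W y - M)) = 0 := by
        rw [split_int hΩb hJc hWc z M]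
        exact hz0
      exact propagation hΩo hΩb hJc hJnn hWc hMle hJr heqz
    -- nonempty set of interior maximum points
    obtain ⟨y1, hy1Ω, hy1d⟩ : ∃ y1 ∈ Ω, dist x0 y1 < r :=
      Metric.mem_closure_iff.1 hx0cl r hr
    have hy1M : W y1 = M := by
      refine hprop x0 hx0cl ?_ y1 ⟨hy1Ω, ?_⟩
      · simpa [hMdef] using hGx0
      · simpa [Metric.mem_ball, dist_comm] using hy1d
    -- constancy over Ω by connectedness
    have hconst : ∀ x ∈ Ω, W x = M := by
      set u : Set (Euc n) :=
        ⋃ (z : Euc n) (_ : z ∈ Ω ∧ W z = M), Metric.ball z r with hu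
      have hu_open : IsOpen u := isOpen_iUnion fun z => isOpen_iUnion fun _ => Metric.isOpen_ball
      have hu_prop : ∀ x ∈ Ω ∩ u, W x = M := by
        rintro x ⟨hxΩ, hxu⟩
        simp only [hu, mem_iUnion] at hxu
        obtain ⟨z, ⟨hzΩ, hzM⟩, hxb⟩ := hxu
        refine hprop z (subset_closure hzΩ) ?_ x ⟨hxΩ, hxb⟩
        have := hG0 z hzΩ
        rw [hzM] at this
        exact this
      set v : Set (Euc n) := Ω ∩ W ⁻¹' (Iio M) with hv
      have hv_open : IsOpen v :=
        (hWc.mono subset_closure).isOpen_inter_preimage hΩo isOpen_Iio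
      intro x hx
      by_contra hne
      have hxlt : W x < M := lt_of_le_of_ne (hMle x (subset_closure hx)) hne
      have hcover : Ω ⊆ u ∪ v := by
        intro w hw
        rcases eq_or_lt_of_le (hMle w (subset_closure hw)) with hEq | hlt
        · left
          simp only [hu, mem_iUnion]
          exact ⟨w, ⟨hw, hEq⟩, Metric.mem_ball_self hr⟩
        · exact Or.inr ⟨hw, hlt⟩
      have hune : (Ω ∩ u).Nonempty := by
        refine ⟨y1, hy1Ω, ?_⟩
        simp only [hu, mem_iUnion]
        exact ⟨y1, ⟨hy1Ω, hy1M⟩, Metric.mem_ball_self hr⟩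
      have hvne : (Ω ∩ v).Nonempty := ⟨x, hx, ⟨hx, hxlt⟩⟩
      obtain ⟨w, hwΩ, hwu, hwv⟩ := hΩc.isPreconnected u v hu_open hv_open hcover hune hvne
      exact absurd (hu_prop w ⟨hwΩ, hwu⟩) (ne_of_lt hwv.2)
    -- positivity of M
    have hMpos : 0 < M := by
      by_contra hMnp
      push_neg at hMnp
      have hzero : ∀ x ∈ Ω, S x + I x = 0 := by
        intro x hx
        have hWx : W x = 0 := le_antisymm ((hconst x hx) ▸ hMnp) (hWnn x (subset_closure hx))
        have hS0 : 0 ≤ S x := hSnonneg x (subset_closure hx)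
        have hI0 : 0 ≤ I x := hInonneg x (subset_closure hx)
        have hWx' : dS * S x + dI * I x = 0 := hWx
        have hS' : S x = 0 := by nlinarith [mul_nonneg hdS.le hS0, mul_nonneg hdI.le hI0]
        have hI' : I x = 0 := by nlinarith [mul_nonneg hdS.le hS0, mul_nonneg hdI.le hI0]
        rw [hS', hI', add_zero]
      have : (∫ x in Ω, (S x + I x)) = 0 := by
        rw [setIntegral_congr_fun hΩm (fun x hx => hzero x hx)]
        simp
      rw [h3] at this
      linarith
    exact ⟨M, hMpos, fun x hx => hconst x hx⟩
  · rintro ⟨⟨k, hk, hconst⟩, heq2, hmass⟩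
    refine ⟨?_, fun x hx => by linarith [heq2 x hx], hmass⟩
    intro x hx
    have hcongr : EqOn (fun y => J (x - y) * (S y - S x))
        (fun y => (-(dI / dS)) * (J (x - y) * (I y - I x))) Ω := by
      intro y hy
      have e1 := hconst x hx
      have e2 := hconst y hy
      have hSd : S y - S x = -(dI / dS) * (I y - I x) := by
        field_simp
        linarith
      show J (x - y) * (S y - S x) = (-(dI / dS)) * (J (x - y) * (I y - I x))
      rw [hSd]; ring
    rw [setIntegral_congr_fun hΩm hcongr, integral_const_mul]
    have h2' := heq2 x hx
    have hkey : dS * (-(dI / dS) * (∫ y in Ω, J (x - y) * (I y - I x)))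
        = -(dI * (∫ y in Ω, J (x - y) * (I y - I x))) := by
      field_simp
    rw [hkey]
    linarith
end
end
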